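/- arXiv:1009.4130 — 3 statements merged into one kernel-verified Lean document; each statement's English description precedes it below -/
import Mathlib

section
/- Fix an integer k ≥ 1. There exists a constant c_k > 0 depending only on k such that for every sequence (p_n) ⊆ (0,1) with n·p_n^k → ∞ and n·p_n^{k+1} → 0 as n → ∞, the number f_k of k-dimensional faces of X(n,p_n) satisfies lim_{n→∞} n^{−2k} · p_n^{−(2·C(k+1,2) − 1)} · Var(f_k) = c_k, where C(k+1,2) = (k+1)k/2. -/
open MeasureTheory ProbabilityTheory Filter
open scoped Classical Topology

/-- The Bernoulli(p) measure on `Bool` (for `p ∈ [0,1]`). -/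
noncomputable def bernoulliMeasure (p : ℝ) : Measure Bool :=
  (PMF.bernoulli (min (Real.toNNReal p) 1) (min_le_right _ _)).toMeasure

instance (p : ℝ) : IsProbabilityMeasure (bernoulliMeasure p) := by
  unfold _root_.bernoulliMeasure; infer_instance

/-- The Erdős–Rényi measure: each potential edge of the complete graph on `Fin n`
is present independently with probability `p`. -/
noncomputable def erMeasure (n : ℕ) (p : ℝ) : Measure (Sym2 (Fin n) → Bool) :=
  Measure.pi fun _ => bernoulliMeasure p

/-- `cliqueCount n j ω` is the number of `j`-dimensional faces of the clique complex
`X(n,p)`, i.e. the number of `(j+1)`-element vertex subsets spanning a complete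
subgraph in the graph encoded by `ω`. -/
noncomputable def cliqueCount (n j : ℕ) (ω : Sym2 (Fin n) → Bool) : ℕ :=
  (((Finset.univ : Finset (Fin n)).powersetCard (j + 1)).filter
    (fun S => ∀ i ∈ S, ∀ i' ∈ S, i ≠ i' → ω s(i, i') = true)).card

/-- `EfK n j p = E[f_j]`, the expected number of `j`-dimensional faces of `X(n,p)`. -/
noncomputable def EfK (n j : ℕ) (p : ℝ) : ℝ :=
  ∫ ω, (cliqueCount n j ω : ℝ) ∂erMeasure n p

/-- The variance of the number of `j`-dimensional faces of `X(n,p)`. -/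
noncomputable def varFK (n j : ℕ) (p : ℝ) : ℝ :=
  variance (fun ω => (cliqueCount n j ω : ℝ)) (erMeasure n p)

noncomputable def cliqueEdges (n : ℕ) (S : Finset (Fin n)) : Finset (Sym2 (Fin n)) :=
  S.sym2.filter fun e => ¬ e.IsDiag

noncomputable def XA (n : ℕ) (A : Finset (Sym2 (Fin n))) (ω : Sym2 (Fin n) → Bool) : ℝ :=
  if ∀ e ∈ A, ω e = true then 1 else 0

lemma mk_mem_cliqueEdges {n : ℕ} {S : Finset (Fin n)} {a b : Fin n} :
    s(a, b) ∈ cliqueEdges n S ↔ (a ∈ S ∧ b ∈ S) ∧ a ≠ b := by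
  simp [cliqueEdges, Finset.mk_mem_sym2_iff, Sym2.mk_isDiag_iff]

lemma card_cliqueEdges {n : ℕ} (S : Finset (Fin n)) :
    (cliqueEdges n S).card = S.card.choose 2 := by
  have h1 : S.sym2.card = (S.card + 1).choose 2 := Finset.card_sym2 S
  have h2 : (S.sym2.filter fun e => e.IsDiag) = S.image (fun a => s(a, a)) := by
    ext e
    refine Sym2.ind (fun a b => ?_) e
    simp only [Finset.mem_filter, Finset.mk_mem_sym2_iff, Sym2.mk_isDiag_iff, Finset.mem_image]
    constructor
    · rintro ⟨⟨ha, hb⟩, rfl⟩; exact ⟨a, ha, rfl⟩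
    · rintro ⟨c, hc, h⟩
      rw [Sym2.eq_iff] at h
      rcases h with ⟨rfl, rfl⟩ | ⟨rfl, rfl⟩ <;> exact ⟨⟨hc, hc⟩, rfl⟩
  have h3 : (S.sym2.filter fun e => e.IsDiag).card = S.card := by
    rw [h2]
    exact Finset.card_image_of_injective _ (fun a b hab => by
      simpa using Sym2.eq_iff.mp hab |>.elim (fun h => h.1) (fun h => h.1))
  have h4 := Finset.card_filter_add_card_filter_not
    (s := S.sym2) (p := fun e => e.IsDiag)
  have h5 : (S.card + 1).choose 2 = S.card + S.card.choose 2 := by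
    rw [Nat.choose_succ_succ, Nat.choose_one_right]
  unfold cliqueEdges
  omega

lemma cliqueEdges_inter {n : ℕ} (S T : Finset (Fin n)) :
    cliqueEdges n (S ∩ T) = cliqueEdges n S ∩ cliqueEdges n T := by
  ext e
  refine Sym2.ind (fun a b => ?_) e
  simp only [mk_mem_cliqueEdges, Finset.mem_inter]
  tauto

lemma card_union_cliqueEdges {n k : ℕ} {S T : Finset (Fin n)}
    (hS : S.card = k + 1) (hT : T.card = k + 1) :
    (cliqueEdges n S ∪ cliqueEdges n T).card
      = 2 * (k + 1).choose 2 - ((S ∩ T).card).choose 2 := by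
  have h1 := Finset.card_union_add_card_inter (cliqueEdges n S) (cliqueEdges n T)
  rw [← cliqueEdges_inter, card_cliqueEdges, card_cliqueEdges, card_cliqueEdges, hS, hT] at h1
  have h2 : ((S ∩ T).card).choose 2 ≤ (k + 1).choose 2 :=
    Nat.choose_le_choose 2 (hS ▸ Finset.card_le_card Finset.inter_subset_left)
  omega

lemma clique_iff {n : ℕ} (S : Finset (Fin n)) (ω : Sym2 (Fin n) → Bool) :
    (∀ i ∈ S, ∀ i' ∈ S, i ≠ i' → ω s(i, i') = true) ↔
      ∀ e ∈ cliqueEdges n S, ω e = true := by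
  constructor
  · intro h e he
    revert he
    refine Sym2.ind (fun a b he => ?_) e
    rw [mk_mem_cliqueEdges] at he
    exact h a he.1.1 b he.1.2 he.2
  · intro h i hi i' hi' hne
    exact h _ (mk_mem_cliqueEdges.mpr ⟨⟨hi, hi'⟩, hne⟩)

lemma cliqueCount_eq_sum (n k : ℕ) (ω : Sym2 (Fin n) → Bool) :
    (cliqueCount n k ω : ℝ)
      = ∑ S ∈ Finset.univ.powersetCard (k + 1), XA n (cliqueEdges n S) ω := by
  rw [cliqueCount, Finset.card_filter, Nat.cast_sum]
  refine Finset.sum_congr rfl fun S _ => ?_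
  by_cases h : ∀ i ∈ S, ∀ i' ∈ S, i ≠ i' → ω s(i, i') = true
  · rw [if_pos h, XA, if_pos ((clique_iff S ω).mp h)]; norm_num
  · rw [if_neg h, XA, if_neg (fun hc => h ((clique_iff S ω).mpr hc))]; norm_num

lemma XA_mul {n : ℕ} (A B : Finset (Sym2 (Fin n))) (ω : Sym2 (Fin n) → Bool) :
    XA n A ω * XA n B ω = XA n (A ∪ B) ω := by
  simp only [XA, Finset.forall_mem_union]
  by_cases hA : ∀ e ∈ A, ω e = true
  · by_cases hB : ∀ e ∈ B, ω e = true
    · rw [if_pos hA, if_pos hB, if_pos ⟨hA, hB⟩]; norm_num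
    · rw [if_neg hB, if_neg (show ¬((∀ e ∈ A, ω e = true) ∧ ∀ e ∈ B, ω e = true) from fun h => hB h.2), mul_zero]
  · rw [if_neg hA, if_neg (show ¬((∀ e ∈ A, ω e = true) ∧ ∀ e ∈ B, ω e = true) from fun h => hA h.1), zero_mul]

lemma bernoulliMeasure_singleton {p : ℝ} (hp0 : 0 ≤ p) (hp1 : p ≤ 1) (b : Bool) :
    (bernoulliMeasure p {b}).toReal = if b then p else 1 - p := by
  have hq : min (Real.toNNReal p) 1 = Real.toNNReal p :=
    min_eq_left (Real.toNNReal_le_one.mpr hp1)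
  rw [_root_.bernoulliMeasure, PMF.toMeasure_apply_singleton _ _ (measurableSet_singleton b)]
  cases b
  · simp only [PMF.bernoulli_apply, Bool.cond_false, hq, if_false]
    rw [ENNReal.coe_toReal, NNReal.coe_sub (Real.toNNReal_le_one.mpr hp1), NNReal.coe_one,
      Real.coe_toNNReal _ hp0]; norm_num
  · simp only [PMF.bernoulli_apply, Bool.cond_true, hq, if_true]
    rw [ENNReal.coe_toReal, Real.coe_toNNReal _ hp0]

lemma integral_bool {p : ℝ} (hp0 : 0 ≤ p) (hp1 : p ≤ 1) (g : Bool → ℝ) :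
    ∫ b, g b ∂(bernoulliMeasure p) = p * g true + (1 - p) * g false := by
  rw [integral_fintype (Integrable.of_finite)]
  rw [Fintype.sum_bool]
  rw [Measure.real_def, Measure.real_def]
  rw [bernoulliMeasure_singleton hp0 hp1, bernoulliMeasure_singleton hp0 hp1]
  simp [smul_eq_mul]

lemma integral_XA (n : ℕ) {p : ℝ} (hp0 : 0 ≤ p) (hp1 : p ≤ 1) (A : Finset (Sym2 (Fin n))) :
    ∫ ω, XA n A ω ∂(erMeasure n p) = p ^ A.card := by
  letI : MeasureSpace Bool := ⟨bernoulliMeasure p⟩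
  haveI : SigmaFinite (volume : Measure Bool) := by
    have : IsFiniteMeasure (bernoulliMeasure p) := inferInstance
    exact (this.toSigmaFinite : SigmaFinite (bernoulliMeasure p))
  have hvol : erMeasure n p = (volume : Measure (Sym2 (Fin n) → Bool)) := rfl
  have hrw : ∀ ω : Sym2 (Fin n) → Bool,
      XA n A ω = ∏ e, (fun b => if e ∈ A → b = true then (1:ℝ) else 0) (ω e) := by
    intro ω
    simp only [XA]
    rw [Fintype.prod_boole]
  calc ∫ ω, XA n A ω ∂(erMeasure n p)
      = ∫ ω : Sym2 (Fin n) → Bool,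
          ∏ e, (fun b => if e ∈ A → b = true then (1:ℝ) else 0) (ω e) := by
        rw [hvol]; exact integral_congr_ae (Filter.Eventually.of_forall hrw)
    _ = ∏ e : Sym2 (Fin n), ∫ b, (if e ∈ A → b = true then (1:ℝ) else 0) :=
        MeasureTheory.integral_fintype_prod_eq_prod
          (fun e b => if e ∈ A → b = true then (1:ℝ) else 0)
    _ = ∏ e : Sym2 (Fin n), (if e ∈ A then p else 1) := by
        refine Finset.prod_congr rfl fun e _ => ?_
        have : (volume : Measure Bool) = _root_.bernoulliMeasure p := rfl
        rw [this, integral_bool hp0 hp1]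
        by_cases he : e ∈ A <;> simp [he]
    _ = p ^ A.card := by
        rw [Finset.prod_ite_mem, Finset.univ_inter, Finset.prod_const]

noncomputable def pairCount (n k j : ℕ) : ℕ :=
  (((Finset.univ.powersetCard (k + 1) : Finset (Finset (Fin n)))
      ×ˢ (Finset.univ.powersetCard (k + 1))).filter
    fun st => (st.1 ∩ st.2).card = j).card

noncomputable def gcov (k : ℕ) (p : ℝ) (j : ℕ) : ℝ :=
  p ^ (2 * (k + 1).choose 2 - j.choose 2) - p ^ (2 * (k + 1).choose 2)

instance erProb (n : ℕ) (p : ℝ) : IsProbabilityMeasure (erMeasure n p) := by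
  unfold erMeasure; infer_instance

lemma integrable_er (n : ℕ) (p : ℝ) (f : (Sym2 (Fin n) → Bool) → ℝ) :
    Integrable f (erMeasure n p) := .of_finite

lemma varFK_eq (n k : ℕ) {p : ℝ} (hp0 : 0 ≤ p) (hp1 : p ≤ 1) :
    varFK n k p = ∑ j ∈ Finset.range (k + 2), (pairCount n k j : ℝ) * gcov k p j := by
  classical
  set P : Finset (Finset (Fin n)) := Finset.univ.powersetCard (k + 1) with hP
  set X : (Sym2 (Fin n) → Bool) → ℝ := fun ω => (cliqueCount n k ω : ℝ) with hX
  have hsum : ∀ ω, X ω = ∑ S ∈ P, XA n (cliqueEdges n S) ω := cliqueCount_eq_sum n k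
  have hml : MemLp X 2 (erMeasure n p) := by
    refine MemLp.of_bound ((measurable_of_countable X).aestronglyMeasurable)
      (P.card : ℝ) (Filter.Eventually.of_forall fun ω => ?_)
    rw [hX, Real.norm_eq_abs, abs_of_nonneg (by positivity)]
    exact_mod_cast Nat.cast_le.mpr (Finset.card_filter_le _ _)
  have hE : ∫ ω, X ω ∂(erMeasure n p) = (P.card : ℝ) * p ^ ((k + 1).choose 2) := by
    rw [integral_congr_ae (Filter.Eventually.of_forall hsum),
      integral_finset_sum _ (fun S _ => integrable_er n p _)]
    rw [Finset.sum_congr rfl (fun S hS => ?_), Finset.sum_const, nsmul_eq_mul]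
    rw [integral_XA n hp0 hp1, card_cliqueEdges, (Finset.mem_powersetCard.mp hS).2]
  have hE2 : ∫ ω, (X ^ 2) ω ∂(erMeasure n p)
      = ∑ st ∈ P ×ˢ P, p ^ ((cliqueEdges n st.1 ∪ cliqueEdges n st.2).card) := by
    have h2 : ∀ ω, (X ^ 2) ω
        = ∑ st ∈ P ×ˢ P, XA n (cliqueEdges n st.1 ∪ cliqueEdges n st.2) ω := by
      intro ω
      rw [Pi.pow_apply, sq, hsum, Finset.sum_mul_sum, Finset.sum_product]
      exact Finset.sum_congr rfl fun S _ =>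
        Finset.sum_congr rfl fun T _ => XA_mul _ _ ω
    rw [integral_congr_ae (Filter.Eventually.of_forall h2),
      integral_finset_sum _ (fun st _ => integrable_er n p _)]
    exact Finset.sum_congr rfl fun st _ => integral_XA n hp0 hp1 _
  have hcard : ∀ st ∈ P ×ˢ P, (cliqueEdges n st.1 ∪ cliqueEdges n st.2).card
      = 2 * (k + 1).choose 2 - ((st.1 ∩ st.2).card).choose 2 := by
    rintro ⟨S, T⟩ hst
    rw [Finset.mem_product] at hst
    exact card_union_cliqueEdges (Finset.mem_powersetCard.mp hst.1).2
      (Finset.mem_powersetCard.mp hst.2).2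
  rw [varFK, variance_eq_sub hml]
  rw [hE, hE2]
  have hsq : ((P.card : ℝ) * p ^ ((k + 1).choose 2)) ^ 2
      = ∑ _st ∈ P ×ˢ P, p ^ (2 * (k + 1).choose 2) := by
    rw [Finset.sum_const, Finset.card_product, nsmul_eq_mul]
    push_cast
    rw [mul_pow, ← pow_mul]
    ring_nf
  rw [hsq, ← Finset.sum_sub_distrib]
  have hstep : ∑ st ∈ P ×ˢ P,
      (p ^ ((cliqueEdges n st.1 ∪ cliqueEdges n st.2).card) - p ^ (2 * (k + 1).choose 2))
      = ∑ st ∈ P ×ˢ P, gcov k p ((st.1 ∩ st.2).card) := by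
    refine Finset.sum_congr rfl fun st hst => ?_
    rw [hcard st hst, gcov]
  rw [hstep]
  have hmaps : ∀ st ∈ P ×ˢ P, ((st.1 ∩ st.2).card) ∈ Finset.range (k + 2) := by
    rintro ⟨S, T⟩ hst
    rw [Finset.mem_product] at hst
    have : (S ∩ T).card ≤ S.card := Finset.card_le_card Finset.inter_subset_left
    rw [(Finset.mem_powersetCard.mp hst.1).2] at this
    simpa using Finset.mem_range.mpr (by omega : (S ∩ T).card < k + 2)
  rw [← Finset.sum_fiberwise_of_maps_to' hmaps (gcov k p)]
  refine Finset.sum_congr rfl fun j _ => ?_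
  rw [Finset.sum_const, nsmul_eq_mul, pairCount]

lemma inner_count {n k j : ℕ} (hj : j ≤ k + 1) (S : Finset (Fin n))
    (hS : S ∈ (Finset.univ.powersetCard (k + 1) : Finset (Finset (Fin n)))) :
    ((Finset.univ.powersetCard (k + 1) : Finset (Finset (Fin n))).filter
        fun T => (S ∩ T).card = j).card
      = (k + 1).choose j * (n - (k + 1)).choose (k + 1 - j) := by
  classical
  obtain ⟨-, hScard⟩ := Finset.mem_powersetCard.mp hS
  have hcardeq : (((Finset.univ.powersetCard (k + 1) : Finset (Finset (Fin n))).filter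
      fun T => (S ∩ T).card = j).card)
      = ((S.powersetCard j) ×ˢ ((Finset.univ \ S).powersetCard (k + 1 - j))).card := by
    refine Finset.card_bij' (fun T _ => (S ∩ T, T \ S)) (fun pr _ => pr.1 ∪ pr.2) ?_ ?_ ?_ ?_
    · intro T hT
      rw [Finset.mem_filter, Finset.mem_powersetCard] at hT
      obtain ⟨⟨-, hTcard⟩, hTj⟩ := hT
      rw [Finset.mem_product, Finset.mem_powersetCard, Finset.mem_powersetCard]
      refine ⟨⟨Finset.inter_subset_left, show (S ∩ T).card = j from hTj⟩, ?_, ?_⟩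
      · show T \ S ⊆ Finset.univ \ S
        exact Finset.sdiff_subset_sdiff (Finset.subset_univ T) (Finset.Subset.refl S)
      · show (T \ S).card = k + 1 - j
        have h1 := Finset.card_inter_add_card_sdiff T S
        rw [Finset.inter_comm T S] at h1
        omega
    · intro pr hpr
      rw [Finset.mem_product, Finset.mem_powersetCard, Finset.mem_powersetCard] at hpr
      obtain ⟨⟨hI, hIcard⟩, hJ, hJcard⟩ := hpr
      have hdisj : Disjoint pr.1 pr.2 := by
        refine Finset.disjoint_left.mpr fun x hx1 hx2 => ?_
        exact (Finset.mem_sdiff.mp (hJ hx2)).2 (hI hx1)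
      have hinter : S ∩ (pr.1 ∪ pr.2) = pr.1 := by
        rw [Finset.inter_union_distrib_left]
        have h1 : S ∩ pr.1 = pr.1 := Finset.inter_eq_right.mpr hI
        have h2 : S ∩ pr.2 = ∅ := by
          refine Finset.eq_empty_of_forall_notMem fun x hx => ?_
          rw [Finset.mem_inter] at hx
          exact (Finset.mem_sdiff.mp (hJ hx.2)).2 hx.1
        rw [h1, h2, Finset.union_empty]
      rw [Finset.mem_filter, Finset.mem_powersetCard]
      refine ⟨⟨Finset.subset_univ _, ?_⟩, by rw [hinter, hIcard]⟩
      rw [Finset.card_union_of_disjoint hdisj]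
      omega
    · intro T hT
      show S ∩ T ∪ T \ S = T
      rw [Finset.inter_comm, Finset.union_comm]
      exact Finset.sdiff_union_inter T S
    · intro pr hpr
      show (S ∩ (pr.1 ∪ pr.2), (pr.1 ∪ pr.2) \ S) = pr
      rw [Finset.mem_product, Finset.mem_powersetCard, Finset.mem_powersetCard] at hpr
      obtain ⟨⟨hI, hIcard⟩, hJ, hJcard⟩ := hpr
      have hinter : S ∩ (pr.1 ∪ pr.2) = pr.1 := by
        rw [Finset.inter_union_distrib_left]
        have h1 : S ∩ pr.1 = pr.1 := Finset.inter_eq_right.mpr hI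
        have h2 : S ∩ pr.2 = ∅ := by
          refine Finset.eq_empty_of_forall_notMem fun x hx => ?_
          rw [Finset.mem_inter] at hx
          exact (Finset.mem_sdiff.mp (hJ hx.2)).2 hx.1
        rw [h1, h2, Finset.union_empty]
      have hsdiff : (pr.1 ∪ pr.2) \ S = pr.2 := by
        rw [Finset.union_sdiff_distrib]
        have h1 : pr.1 \ S = ∅ := Finset.sdiff_eq_empty_iff_subset.mpr hI
        have h2 : pr.2 \ S = pr.2 := by
          refine Finset.sdiff_eq_self_of_disjoint ?_
          refine Finset.disjoint_left.mpr fun x hx2 hxS => ?_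
          exact (Finset.mem_sdiff.mp (hJ hx2)).2 hxS
        rw [h1, h2, Finset.empty_union]
      exact Prod.ext hinter hsdiff
  rw [hcardeq, Finset.card_product, Finset.card_powersetCard, Finset.card_powersetCard,
    hScard, Finset.card_sdiff_of_subset (Finset.subset_univ S), Finset.card_univ, Fintype.card_fin, hScard]

lemma pairCount_eq (n k j : ℕ) (hj : j ≤ k + 1) :
    pairCount n k j
      = n.choose (k + 1) * ((k + 1).choose j * (n - (k + 1)).choose (k + 1 - j)) := by
  classical
  rw [pairCount, Finset.card_filter, Finset.sum_product]
  have h1 : ∀ S ∈ (Finset.univ.powersetCard (k + 1) : Finset (Finset (Fin n))),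
      (∑ T ∈ (Finset.univ.powersetCard (k + 1) : Finset (Finset (Fin n))),
        if (S ∩ T).card = j then 1 else 0)
      = (k + 1).choose j * (n - (k + 1)).choose (k + 1 - j) := by
    intro S hS
    rw [← Finset.card_filter]
    exact inner_count hj S hS
  rw [Finset.sum_congr rfl h1, Finset.sum_const, smul_eq_mul,
    Finset.card_powersetCard, Finset.card_univ, Fintype.card_fin]

lemma two_mul_choose_two (j : ℕ) : j.choose 2 * 2 = j * (j - 1) := by
  induction j with
  | zero => rfl
  | succ m ih =>
    rw [Nat.choose_succ_succ, Nat.choose_one_right]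
    cases m with
    | zero => rfl
    | succ s =>
      have hs : (s + 1) * (s + 1 - 1) = (s + 1) * s := rfl
      rw [hs] at ih
      have : (s + 2) * (s + 2 - 1) = (s + 2) * (s + 1) := rfl
      rw [this]
      nlinarith [ih]

lemma aux_exp {k j : ℕ} (h3 : 3 ≤ j) (hjk : j ≤ k + 1) :
    j.choose 2 - 1 ≤ k * (j - 2) := by
  obtain ⟨t, rfl⟩ : ∃ t, j = t + 3 := ⟨j - 3, by omega⟩
  have h2q : (t + 3).choose 2 * 2 = (t + 3) * (t + 2) := two_mul_choose_two (t + 3)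
  have hk : t + 2 ≤ k := by omega
  have hmul : (t + 2) * (t + 1) ≤ k * (t + 1) := Nat.mul_le_mul_right _ hk
  obtain ⟨q', hq'⟩ : ∃ q', (t + 3).choose 2 = q' + 1 := by
    refine ⟨(t + 3).choose 2 - 1, ?_⟩
    have : 1 ≤ (t + 3).choose 2 := Nat.choose_pos (by omega)
    omega
  rw [hq']
  rw [hq'] at h2q
  have hgoal : q' * 2 ≤ k * (t + 3 - 2) * 2 := by
    have hexp : t + 3 - 2 = t + 1 := by omega
    rw [hexp]
    nlinarith [h2q, hmul]
  omega

lemma choose_le_pow' (n r : ℕ) : n.choose r ≤ n ^ r := by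
  calc n.choose r ≤ n.descFactorial r := by
        rw [Nat.descFactorial_eq_factorial_mul_choose]
        exact Nat.le_mul_of_pos_left _ (Nat.factorial_pos r)
    _ ≤ n ^ r := Nat.descFactorial_le_pow n r

lemma tendsto_choose_sub_div (m r : ℕ) :
    Filter.Tendsto (fun n : ℕ => ((n - m).choose r : ℝ) / (n : ℝ) ^ r)
      Filter.atTop (𝓝 (1 / r.factorial)) := by
  have h : Filter.Tendsto
      (fun n : ℕ => (∏ i ∈ Finset.range r, (1 - ((m + i : ℕ) : ℝ) / n)) / r.factorial)
      Filter.atTop (𝓝 ((∏ i ∈ Finset.range r, (1 : ℝ)) / r.factorial)) := by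
    refine Filter.Tendsto.div_const ?_ _
    refine tendsto_finset_prod _ fun i _ => ?_
    have := (tendsto_const_div_atTop_nhds_zero_nat ((m + i : ℕ) : ℝ)).const_sub 1
    simpa using this
  rw [Finset.prod_const_one] at h
  refine Filter.Tendsto.congr' ?_ h
  filter_upwards [Filter.eventually_ge_atTop (m + r + 1)] with n hn
  have hn0 : (0 : ℝ) < n := by exact_mod_cast (by omega : 0 < n)
  have hmn : ∀ i ∈ Finset.range r, m + i ≤ n := fun i hi => by
    have := Finset.mem_range.mp hi; omega
  have hprod : ∏ i ∈ Finset.range r, (1 - ((m + i : ℕ) : ℝ) / n)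
      = (∏ i ∈ Finset.range r, ((n - (m + i) : ℕ) : ℝ)) / (n : ℝ) ^ r := by
    calc ∏ i ∈ Finset.range r, (1 - ((m + i : ℕ) : ℝ) / n)
        = ∏ i ∈ Finset.range r, (((n - (m + i) : ℕ) : ℝ) / n) :=
          Finset.prod_congr rfl (fun i hi => by
            rw [Nat.cast_sub (hmn i hi)]
            push_cast
            field_simp)
      _ = (∏ i ∈ Finset.range r, ((n - (m + i) : ℕ) : ℝ))
            / ∏ _i ∈ Finset.range r, (n : ℝ) := Finset.prod_div_distrib _ _
      _ = _ := by rw [Finset.prod_const, Finset.card_range]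
  have hkey : ((n - m).choose r : ℝ) * r.factorial
      = ∏ i ∈ Finset.range r, ((n - (m + i) : ℕ) : ℝ) := by
    have h1 : (n - m).descFactorial r = ∏ i ∈ Finset.range r, (n - m - i) :=
      Nat.descFactorial_eq_prod_range _ _
    have h2 : (n - m).descFactorial r = r.factorial * (n - m).choose r :=
      Nat.descFactorial_eq_factorial_mul_choose _ _
    have h3 : ∀ i, n - (m + i) = n - m - i := fun i => by omega
    rw [← Nat.cast_prod]
    simp_rw [h3]
    rw [← h1, h2]
    push_cast
    ring
  rw [hprod, div_div, div_eq_div_iff (by positivity) (by positivity)]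
  calc (∏ i ∈ Finset.range r, ((n - (m + i) : ℕ) : ℝ)) * (n : ℝ) ^ r
      = (((n - m).choose r : ℝ) * r.factorial) * (n : ℝ) ^ r := by rw [hkey]
    _ = ((n - m).choose r : ℝ) * ((n : ℝ) ^ r * r.factorial) := by ring

/-- for `k ≥ 1` there is a constant `c_k > 0` such that for any
`p_n ∈ (0,1)` with `n·p_n^k → ∞` and `n·p_n^{k+1} → 0`,
`Var(f_k) / (n^{2k} p_n^{2·C(k+1,2) - 1}) → c_k`. -/
theorem variance_asymptotics (k : ℕ) (hk : 1 ≤ k) :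
    ∃ c : ℝ, 0 < c ∧ ∀ p : ℕ → ℝ, (∀ n, 0 < p n ∧ p n < 1) →
      Tendsto (fun n : ℕ => (n : ℝ) * p n ^ k) atTop atTop →
      Tendsto (fun n : ℕ => (n : ℝ) * p n ^ (k + 1)) atTop (𝓝 0) →
      Tendsto (fun n : ℕ =>
          varFK n k (p n) /
            ((n : ℝ) ^ (2 * k) * p n ^ (2 * Nat.choose (k + 1) 2 - 1)))
        atTop (𝓝 c) := by
  classical
  set e := (k + 1).choose 2 with he
  have he1 : 1 ≤ e := Nat.choose_pos (by omega)
  set c : ℝ := 1 / (k + 1).factorial * ((k + 1).choose 2 : ℝ) * (1 / (k - 1).factorial)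
    with hc
  have hcpos : 0 < c := by
    have h1 : (0 : ℝ) < ((k + 1).choose 2 : ℝ) := by
      exact_mod_cast Nat.choose_pos (by omega)
    have h2 : (0 : ℝ) < ((k + 1).factorial : ℝ) := by exact_mod_cast (k + 1).factorial_pos
    have h3 : (0 : ℝ) < ((k - 1).factorial : ℝ) := by exact_mod_cast (k - 1).factorial_pos
    positivity
  refine ⟨c, hcpos, fun p hp h1 h2 => ?_⟩
  have hptend : Filter.Tendsto (fun n => p n) Filter.atTop (𝓝 0) := by
    have hdiv := Filter.Tendsto.div_atTop h2 h1
    refine Filter.Tendsto.congr' ?_ hdiv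
    filter_upwards [Filter.eventually_ge_atTop 1] with n hn
    have hn0 : (0 : ℝ) < n := by exact_mod_cast hn
    have hne : (n : ℝ) * p n ^ k ≠ 0 := by
      exact mul_ne_zero hn0.ne' (pow_ne_zero _ (hp n).1.ne')
    rw [pow_succ, ← mul_assoc]
    exact mul_div_cancel_left₀ (p n) hne
  have hvar : ∀ n, varFK n k (p n) / ((n : ℝ) ^ (2 * k) * p n ^ (2 * e - 1))
      = ∑ j ∈ Finset.range (k + 2),
          (pairCount n k j : ℝ) * gcov k (p n) j
            / ((n : ℝ) ^ (2 * k) * p n ^ (2 * e - 1)) := by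
    intro n
    rw [varFK_eq n k (hp n).1.le (hp n).2.le, Finset.sum_div]
  have hsum_L : ∑ j ∈ Finset.range (k + 2), (if j = 2 then c else 0) = c := by
    rw [Finset.sum_ite_eq' (Finset.range (k + 2)) 2 (fun _ => c)]
    simp only [Finset.mem_range, if_pos (by omega : 2 < k + 2)]
  refine Filter.Tendsto.congr (fun n => (hvar n).symm) ?_
  rw [← hsum_L]
  refine tendsto_finset_sum _ fun j hj => ?_
  have hjk : j ≤ k + 1 := by have := Finset.mem_range.mp hj; omega
  rcases Nat.lt_or_ge j 2 with hj2 | hj2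
  · -- j = 0 or 1 : gcov = 0
    have hg0 : ∀ n, gcov k (p n) j = 0 := by
      intro n
      rw [gcov, Nat.choose_eq_zero_of_lt hj2, Nat.sub_zero, sub_self]
    rw [if_neg (by omega)]
    refine Filter.Tendsto.congr (fun n => ?_) tendsto_const_nhds
    rw [hg0, mul_zero, zero_div]
  rcases Nat.eq_or_lt_of_le hj2 with hj2e | hj3
  · -- j = 2
    subst hj2e
    rw [if_pos rfl]
    have hL1 := tendsto_choose_sub_div 0 (k + 1)
    simp only [Nat.sub_zero] at hL1
    have hL2 := tendsto_choose_sub_div (k + 1) (k - 1)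
    have hfin := ((hL1.mul (tendsto_const_nhds
        (x := ((k + 1).choose 2 : ℝ)))).mul hL2).mul
        ((tendsto_const_nhds (x := (1 : ℝ))).sub hptend)
    have hval : 1 / ((k + 1).factorial : ℝ) * ((k + 1).choose 2 : ℝ)
        * (1 / ((k - 1).factorial : ℝ)) * (1 - 0) = c := by rw [hc]; ring
    rw [hval] at hfin
    refine Filter.Tendsto.congr' ?_ hfin
    filter_upwards [Filter.eventually_ge_atTop 1] with n hn
    have hn0 : (0 : ℝ) < n := by exact_mod_cast hn
    obtain ⟨hp0, hp1⟩ := hp n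
    have h12 : k + 1 - 2 = k - 1 := by omega
    have hg2 : gcov k (p n) 2 = p n ^ (2 * e - 1) - p n ^ (2 * e) := by
      rw [gcov, Nat.choose_self]
    have hps : p n ^ (2 * e) = p n ^ (2 * e - 1) * p n := by
      rw [← pow_succ]; congr 1; omega
    have hns : (n : ℝ) ^ (2 * k) = (n : ℝ) ^ (k + 1) * (n : ℝ) ^ (k - 1) := by
      rw [← pow_add]; congr 1; omega
    rw [pairCount_eq n k 2 (by omega), h12, hg2, hps, hns]
    have hpne : p n ^ (2 * e - 1) ≠ 0 := pow_ne_zero _ hp0.ne'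
    have hnne1 : (n : ℝ) ^ (k + 1) ≠ 0 := pow_ne_zero _ hn0.ne'
    have hnne2 : (n : ℝ) ^ (k - 1) ≠ 0 := pow_ne_zero _ hn0.ne'
    push_cast
    field_simp
  · -- 3 ≤ j
    rw [if_neg (by omega)]
    have hgnn : ∀ n, 0 ≤ gcov k (p n) j := by
      intro n
      rw [gcov, sub_nonneg]
      exact pow_le_pow_of_le_one (hp n).1.le (hp n).2.le (Nat.sub_le _ _)
    have hlo : ∀ n, 0 ≤ (pairCount n k j : ℝ) * gcov k (p n) j
        / ((n : ℝ) ^ (2 * k) * p n ^ (2 * e - 1)) := by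
      intro n
      refine div_nonneg (mul_nonneg (Nat.cast_nonneg _) (hgnn n)) ?_
      exact mul_nonneg (pow_nonneg (Nat.cast_nonneg _) _) (pow_nonneg (hp n).1.le _)
    have htend : Filter.Tendsto
        (fun n : ℕ => ((k + 1).choose j : ℝ) / (((n : ℝ) * p n ^ k) ^ (j - 2)))
        Filter.atTop (𝓝 0) := by
      refine Filter.Tendsto.div_atTop tendsto_const_nhds ?_
      exact (tendsto_pow_atTop (by omega : j - 2 ≠ 0)).comp h1
    refine tendsto_of_tendsto_of_tendsto_of_le_of_le' tendsto_const_nhds htend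
      (Filter.Eventually.of_forall hlo) ?_
    filter_upwards [Filter.eventually_ge_atTop 1] with n hn
    have hn0 : (0 : ℝ) < n := by exact_mod_cast hn
    obtain ⟨hp0, hp1⟩ := hp n
    set q := j.choose 2 with hq
    have hq1 : 1 ≤ q := Nat.choose_pos (by omega)
    have hqe : q ≤ e := Nat.choose_le_choose 2 hjk
    have hqk : q - 1 ≤ k * (j - 2) := aux_exp (by omega) hjk
    have hN : (pairCount n k j : ℝ) ≤ ((k + 1).choose j : ℝ) * (n : ℝ) ^ (2 * k + 2 - j) := by
      have hnat : pairCount n k j ≤ (k + 1).choose j * n ^ (2 * k + 2 - j) := by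
        rw [pairCount_eq n k j hjk]
        calc n.choose (k + 1) * ((k + 1).choose j * (n - (k + 1)).choose (k + 1 - j))
            ≤ n ^ (k + 1) * ((k + 1).choose j * n ^ (k + 1 - j)) := by
              refine Nat.mul_le_mul (choose_le_pow' n (k + 1)) (Nat.mul_le_mul_left _ ?_)
              exact le_trans (choose_le_pow' _ _) (Nat.pow_le_pow_left (Nat.sub_le n (k + 1)) _)
          _ = (k + 1).choose j * n ^ (2 * k + 2 - j) := by
              rw [show 2 * k + 2 - j = (k + 1) + (k + 1 - j) by omega, pow_add]
              ring
      calc (pairCount n k j : ℝ) ≤ (((k + 1).choose j * n ^ (2 * k + 2 - j) : ℕ) : ℝ) :=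
            Nat.cast_le.mpr hnat
        _ = ((k + 1).choose j : ℝ) * (n : ℝ) ^ (2 * k + 2 - j) := by push_cast; ring
    have hg : gcov k (p n) j ≤ p n ^ (2 * e - q) := by
      rw [gcov]
      exact sub_le_self _ (pow_nonneg hp0.le _)
    have hxp : (0 : ℝ) < (n : ℝ) ^ (2 * k) * p n ^ (2 * e - 1) :=
      mul_pos (pow_pos hn0 _) (pow_pos hp0 _)
    calc (pairCount n k j : ℝ) * gcov k (p n) j / ((n : ℝ) ^ (2 * k) * p n ^ (2 * e - 1))
        ≤ ((k + 1).choose j : ℝ) * (n : ℝ) ^ (2 * k + 2 - j) * p n ^ (2 * e - q)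
            / ((n : ℝ) ^ (2 * k) * p n ^ (2 * e - 1)) := by
          refine (div_le_div_iff_of_pos_right hxp).mpr ?_
          exact mul_le_mul hN hg (hgnn n) (by positivity)
      _ = ((k + 1).choose j : ℝ) / ((n : ℝ) ^ (j - 2) * p n ^ (q - 1)) := by
          have hns : (n : ℝ) ^ (2 * k) = (n : ℝ) ^ (2 * k + 2 - j) * (n : ℝ) ^ (j - 2) := by
            rw [← pow_add]; congr 1; omega
          have hps : p n ^ (2 * e - 1) = p n ^ (2 * e - q) * p n ^ (q - 1) := by
            rw [← pow_add]; congr 1; omega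
          rw [hns, hps]
          have ha : (n : ℝ) ^ (2 * k + 2 - j) ≠ 0 := pow_ne_zero _ hn0.ne'
          have hb : p n ^ (2 * e - q) ≠ 0 := pow_ne_zero _ hp0.ne'
          have hd : (n : ℝ) ^ (j - 2) ≠ 0 := pow_ne_zero _ hn0.ne'
          have hf : p n ^ (q - 1) ≠ 0 := pow_ne_zero _ hp0.ne'
          field_simp
      _ ≤ ((k + 1).choose j : ℝ) / ((n : ℝ) ^ (j - 2) * p n ^ (k * (j - 2))) := by
          refine div_le_div_of_nonneg_left (by positivity)
            (mul_pos (pow_pos hn0 _) (pow_pos hp0 _)) ?_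
          exact mul_le_mul_of_nonneg_left
            (pow_le_pow_of_le_one hp0.le hp1.le hqk) (by positivity)
      _ = ((k + 1).choose j : ℝ) / (((n : ℝ) * p n ^ k) ^ (j - 2)) := by
          rw [mul_pow, ← pow_mul]
end

section
/- Fix an integer k ≥ 1 and a sequence (p_n) ⊆ (0,1) with n·p_n^k → ∞ and n·p_n^{k+1} → 0 as n → ∞. Then, with f_j computed in X(n,p_n) and f̃_k := −f_{k−1} + f_k − f_{k+1}, one has lim_{n→∞} Var(f_k) / Var(f̃_k) = 1. -/
open MeasureTheory ProbabilityTheory Filter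
open scoped Classical Topology

namespace ERProof


variable {n : ℕ} {p : ℝ}

instance erProb (n : ℕ) (p : ℝ) : IsProbabilityMeasure (erMeasure n p) := by
  unfold erMeasure; infer_instance

/-- the edge set of a vertex set -/
noncomputable def edgesOf (S : Finset (Fin n)) : Finset (Sym2 (Fin n)) :=
  S.offDiag.image (Function.uncurry Sym2.mk)

lemma mem_edgesOf {S : Finset (Fin n)} {e : Sym2 (Fin n)} :
    e ∈ edgesOf S ↔ ∃ a b : Fin n, a ∈ S ∧ b ∈ S ∧ a ≠ b ∧ e = s(a, b) := by
  simp only [edgesOf, Finset.mem_image, Finset.mem_offDiag, Prod.exists, Function.uncurry_apply_pair]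
  constructor
  · rintro ⟨a, b, ⟨ha, hb, hab⟩, rfl⟩; exact ⟨a, b, ha, hb, hab, rfl⟩
  · rintro ⟨a, b, ha, hb, hab, rfl⟩; exact ⟨a, b, ⟨ha, hb, hab⟩, rfl⟩

lemma card_edgesOf (S : Finset (Fin n)) : (edgesOf S).card = S.card.choose 2 :=
  Sym2.card_image_offDiag S

lemma edgesOf_subset {S T : Finset (Fin n)} (h : S ⊆ T) : edgesOf S ⊆ edgesOf T := by
  intro e he
  rw [mem_edgesOf] at he ⊢
  obtain ⟨a, b, ha, hb, hab, rfl⟩ := he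
  exact ⟨a, b, h ha, h hb, hab, rfl⟩

lemma edgesOf_inter (S T : Finset (Fin n)) :
    edgesOf (S ∩ T) = edgesOf S ∩ edgesOf T := by
  apply Finset.Subset.antisymm
  · exact Finset.subset_inter (edgesOf_subset Finset.inter_subset_left)
      (edgesOf_subset Finset.inter_subset_right)
  · intro e he
    rw [Finset.mem_inter, mem_edgesOf, mem_edgesOf] at he
    obtain ⟨⟨a, b, ha, hb, hab, rfl⟩, ⟨c, d, hc, hd, hcd, hee⟩⟩ := he
    rw [mem_edgesOf]
    refine ⟨a, b, ?_, ?_, hab, rfl⟩ <;> rw [Finset.mem_inter] <;>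
      rcases Sym2.eq_iff.1 hee with ⟨rfl, rfl⟩ | ⟨rfl, rfl⟩
    · exact ⟨ha, hc⟩
    · exact ⟨ha, hd⟩
    · exact ⟨hb, hd⟩
    · exact ⟨hb, hc⟩

/-- cardinality of the union of two edge sets -/
lemma card_edgesOf_union (S T : Finset (Fin n)) :
    (edgesOf S ∪ edgesOf T).card + ((S ∩ T).card.choose 2)
      = (edgesOf S).card + (edgesOf T).card := by
  have h := Finset.card_union_add_card_inter (edgesOf S) (edgesOf T)
  rw [← edgesOf_inter, card_edgesOf] at h
  exact h

/-- the clique condition as an edge condition -/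
lemma clique_iff (S : Finset (Fin n)) (ω : Sym2 (Fin n) → Bool) :
    (∀ i ∈ S, ∀ i' ∈ S, i ≠ i' → ω s(i, i') = true) ↔ ∀ e ∈ edgesOf S, ω e = true := by
  constructor
  · intro h e he
    obtain ⟨a, b, ha, hb, hab, rfl⟩ := mem_edgesOf.1 he
    exact h a ha b hb hab
  · intro h i hi i' hi' hne
    exact h _ (mem_edgesOf.2 ⟨i, i', hi, hi', hne, rfl⟩)

/-- cylinder sets -/
lemma erMeasure_cyl (hp0 : 0 ≤ p) (hp1 : p ≤ 1) (A : Finset (Sym2 (Fin n))) :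
    erMeasure n p {ω | ∀ e ∈ A, ω e = true} = ENNReal.ofReal (p ^ A.card) := by
  have hset : {ω : Sym2 (Fin n) → Bool | ∀ e ∈ A, ω e = true}
      = Set.pi Set.univ (fun e => if e ∈ A then ({true} : Set Bool) else Set.univ) := by
    ext ω
    simp only [Set.mem_setOf_eq, Set.mem_pi, Set.mem_univ, forall_true_left]
    constructor
    · intro h e
      by_cases he : e ∈ A <;> simp [he, h e]
    · intro h e he
      have := h e; rw [if_pos he] at this; simpa using this
  have hb : bernoulliMeasure p {true} = ENNReal.ofReal p := by
    unfold _root_.bernoulliMeasure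
    rw [PMF.toMeasure_apply_singleton _ _ (measurableSet_singleton _)]
    simp [min_eq_left (Real.toNNReal_le_one.2 hp1), ENNReal.ofReal, PMF.bernoulli_apply]
  rw [hset, erMeasure, Measure.pi_pi]
  have : ∀ e : Sym2 (Fin n), bernoulliMeasure p (if e ∈ A then ({true} : Set Bool) else Set.univ)
      = if e ∈ A then ENNReal.ofReal p else 1 := by
    intro e; by_cases he : e ∈ A
    · simp [he, hb]
    · rw [if_neg he, if_neg he, measure_univ]
  rw [Finset.prod_congr rfl (fun e _ => this e)]
  rw [Finset.prod_ite_mem Finset.univ A (fun _ => ENNReal.ofReal p), Finset.univ_inter,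
    Finset.prod_const, ← ENNReal.ofReal_pow hp0]

/-- integral of a cylinder indicator -/
lemma integral_cyl (hp0 : 0 ≤ p) (hp1 : p ≤ 1) (A : Finset (Sym2 (Fin n))) :
    ∫ ω, (if (∀ e ∈ A, ω e = true) then (1 : ℝ) else 0) ∂erMeasure n p = p ^ A.card := by
  have : (fun ω : Sym2 (Fin n) → Bool => if (∀ e ∈ A, ω e = true) then (1 : ℝ) else 0)
      = Set.indicator {ω | ∀ e ∈ A, ω e = true} (fun _ => (1 : ℝ)) := by
    ext ω; rw [Set.indicator_apply]; rfl
  rw [this, integral_indicator_const (1 : ℝ) (Set.toFinite _).measurableSet,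
    measureReal_def, erMeasure_cyl hp0 hp1, smul_eq_mul, mul_one, ENNReal.toReal_ofReal (pow_nonneg hp0 _)]

variable (n p) in
lemma memLp_all (f : (Sym2 (Fin n) → Bool) → ℝ) : MemLp f 2 (erMeasure n p) := by
  obtain ⟨C, hC⟩ := Finite.exists_le (fun ω => ‖f ω‖)
  exact MemLp.of_bound (measurable_of_countable f).aestronglyMeasurable C
    (Filter.Eventually.of_forall hC)

variable (n p) in
lemma integrable_all (f : (Sym2 (Fin n) → Bool) → ℝ) : Integrable f (erMeasure n p) :=
  (memLp_all n p f).integrable one_le_two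

/-- clique indicator -/
noncomputable def XS (S : Finset (Fin n)) (ω : Sym2 (Fin n) → Bool) : ℝ :=
  if (∀ e ∈ edgesOf S, ω e = true) then 1 else 0

lemma cliqueCount_eq (j : ℕ) (ω : Sym2 (Fin n) → Bool) :
    (cliqueCount n j ω : ℝ)
      = ∑ S ∈ Finset.powersetCard (j + 1) (Finset.univ : Finset (Fin n)), XS S ω := by
  rw [cliqueCount, Finset.card_filter]
  push_cast
  refine Finset.sum_congr rfl fun S _ => ?_
  rw [XS]
  by_cases h : ∀ e ∈ edgesOf S, ω e = true
  · rw [if_pos h, if_pos ((clique_iff S ω).2 h)]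
  · rw [if_neg h, if_neg (fun h' => h ((clique_iff S ω).1 h'))]

lemma integral_XS (hp0 : 0 ≤ p) (hp1 : p ≤ 1) (S : Finset (Fin n)) :
    ∫ ω, XS S ω ∂erMeasure n p = p ^ (edgesOf S).card := by
  rw [show (fun ω => XS S ω) = fun ω => if (∀ e ∈ edgesOf S, ω e = true) then (1:ℝ) else 0
    from rfl]
  exact integral_cyl hp0 hp1 _

lemma XS_mul (S T : Finset (Fin n)) (ω : Sym2 (Fin n) → Bool) :
    XS S ω * XS T ω = if (∀ e ∈ edgesOf S ∪ edgesOf T, ω e = true) then (1:ℝ) else 0 := by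
  rw [XS, XS]
  simp only [Finset.mem_union]
  by_cases h1 : ∀ e ∈ edgesOf S, ω e = true <;>
    by_cases h2 : ∀ e ∈ edgesOf T, ω e = true
  · rw [if_pos h1, if_pos h2, one_mul,
      if_pos (fun e he => he.elim (h1 e) (h2 e))]
  · rw [if_neg h2, mul_zero, if_neg (fun h => h2 (fun e he => h e (Or.inr he)))]
  · rw [if_neg h1, zero_mul, if_neg (fun h => h1 (fun e he => h e (Or.inl he)))]
  · rw [if_neg h1, zero_mul, if_neg (fun h => h1 (fun e he => h e (Or.inl he)))]

lemma integral_XS_mul (hp0 : 0 ≤ p) (hp1 : p ≤ 1) (S T : Finset (Fin n)) :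
    ∫ ω, XS S ω * XS T ω ∂erMeasure n p = p ^ (edgesOf S ∪ edgesOf T).card := by
  rw [show (fun ω => XS S ω * XS T ω)
      = fun ω => if (∀ e ∈ edgesOf S ∪ edgesOf T, ω e = true) then (1:ℝ) else 0
    from funext fun ω => XS_mul S T ω]
  exact integral_cyl hp0 hp1 _

lemma variance_cliqueCount (hp0 : 0 ≤ p) (hp1 : p ≤ 1) (j : ℕ) :
    variance (fun ω => (cliqueCount n j ω : ℝ)) (erMeasure n p)
      = ∑ S ∈ Finset.powersetCard (j + 1) (Finset.univ : Finset (Fin n)),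
          ∑ T ∈ Finset.powersetCard (j + 1) (Finset.univ : Finset (Fin n)),
            (p ^ (edgesOf S ∪ edgesOf T).card
              - p ^ ((edgesOf S).card + (edgesOf T).card)) := by
  set P := Finset.powersetCard (j + 1) (Finset.univ : Finset (Fin n)) with hP
  rw [variance_eq_sub (memLp_all n p _)]
  have hsq : ∫ ω, ((fun ω => (cliqueCount n j ω : ℝ)) ^ 2) ω ∂erMeasure n p
      = ∑ S ∈ P, ∑ T ∈ P, p ^ (edgesOf S ∪ edgesOf T).card := by
    have : ∀ ω : Sym2 (Fin n) → Bool, ((fun ω => (cliqueCount n j ω : ℝ)) ^ 2) ω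
        = ∑ S ∈ P, ∑ T ∈ P, XS S ω * XS T ω := by
      intro ω
      simp only [Pi.pow_apply]
      rw [sq, cliqueCount_eq j ω, Finset.sum_mul_sum]
    rw [integral_congr_ae (Filter.Eventually.of_forall this),
      integral_finset_sum _ (fun S _ => integrable_all n p _)]
    refine Finset.sum_congr rfl fun S _ => ?_
    rw [integral_finset_sum _ (fun T _ => integrable_all n p _)]
    exact Finset.sum_congr rfl fun T _ => integral_XS_mul hp0 hp1 S T
  have hev : ∫ ω, (cliqueCount n j ω : ℝ) ∂erMeasure n p
      = ∑ S ∈ P, p ^ (edgesOf S).card := by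
    rw [integral_congr_ae (Filter.Eventually.of_forall (cliqueCount_eq j)),
      integral_finset_sum _ (fun S _ => integrable_all n p _)]
    exact Finset.sum_congr rfl fun S _ => integral_XS hp0 hp1 S
  rw [hsq, hev, sq, Finset.sum_mul_sum, ← Finset.sum_sub_distrib]
  refine Finset.sum_congr rfl fun S _ => ?_
  rw [← Finset.sum_sub_distrib]
  exact Finset.sum_congr rfl fun T _ => by rw [pow_add]

/-! ### Counting pairs with given intersection -/

/-- pairs of `a`-sets with intersection of size `m` -/
noncomputable def pairFiber (n a m : ℕ) : Finset (Finset (Fin n) × Finset (Fin n)) :=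
  (Finset.powersetCard a (Finset.univ : Finset (Fin n))
      ×ˢ Finset.powersetCard a (Finset.univ : Finset (Fin n))).filter
    fun st => (st.1 ∩ st.2).card = m

lemma pairFiber_card_le (a m : ℕ) (hm : m ≤ a) :
    (pairFiber n a m).card ≤ n ^ (2 * a - m) := by
  have h1 : (pairFiber n a m).card ≤
      ((Finset.powersetCard m (Finset.univ : Finset (Fin n)))
        ×ˢ ((Finset.powersetCard (a - m) (Finset.univ : Finset (Fin n)))
        ×ˢ (Finset.powersetCard (a - m) (Finset.univ : Finset (Fin n))))).card := by
    apply Finset.card_le_card_of_injOn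
      (fun st => (st.1 ∩ st.2, (st.1 \ st.2, st.2 \ st.1)))
    · rintro ⟨S, T⟩ hST
      simp only [pairFiber, Finset.mem_filter, Finset.mem_product,
        Finset.mem_powersetCard, Finset.mem_coe] at hST ⊢
      obtain ⟨⟨⟨-, hS⟩, -, hT⟩, hm'⟩ := hST
      have h1 := Finset.card_sdiff_add_card_inter S T
      have h2 := Finset.card_sdiff_add_card_inter T S
      rw [Finset.inter_comm T S] at h2
      exact ⟨⟨Finset.subset_univ _, hm'⟩, ⟨Finset.subset_univ _, by omega⟩,
        ⟨Finset.subset_univ _, by omega⟩⟩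
    · rintro ⟨S, T⟩ - ⟨S', T'⟩ - h
      simp only [Prod.mk.injEq] at h
      obtain ⟨h1, h2, h3⟩ := h
      have hS : S = S' := by
        rw [← Finset.sdiff_union_inter S T, ← Finset.sdiff_union_inter S' T', h1, h2]
      have hT : T = T' := by
        rw [← Finset.sdiff_union_inter T S, ← Finset.sdiff_union_inter T' S',
          Finset.inter_comm T S, Finset.inter_comm T' S', h1, h3]
      exact Prod.ext hS hT
  refine h1.trans ?_
  simp only [Finset.card_product, Finset.card_powersetCard, Finset.card_univ, Fintype.card_fin]
  calc n.choose m * (n.choose (a - m) * n.choose (a - m))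
      ≤ n ^ m * (n ^ (a - m) * n ^ (a - m)) := by
        exact Nat.mul_le_mul (Nat.choose_le_pow _ _)
          (Nat.mul_le_mul (Nat.choose_le_pow _ _) (Nat.choose_le_pow _ _))
    _ = n ^ (2 * a - m) := by
        rw [← pow_add, ← pow_add]; congr 1; omega

lemma pairFiber_card_ge (a m : ℕ) (hm : m ≤ a) :
    n.choose (2 * a - m) ≤ (pairFiber n a m).card := by
  have : (Finset.powersetCard (2 * a - m) (Finset.univ : Finset (Fin n))).card
      = n.choose (2 * a - m) := by
    rw [Finset.card_powersetCard, Finset.card_univ, Fintype.card_fin]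
  rw [← this]
  apply Finset.card_le_card_of_surjOn (fun st => st.1 ∪ st.2)
  intro U hU
  simp only [Finset.mem_coe, Finset.mem_powersetCard] at hU
  obtain ⟨-, hUcard⟩ := hU
  have haU : a ≤ U.card := by omega
  obtain ⟨S, hSU, hScard⟩ := Finset.exists_subset_card_eq haU
  obtain ⟨W, hWS, hWcard⟩ := Finset.exists_subset_card_eq (s := S) (n := m) (by omega)
  set T := (U \ S) ∪ W with hT
  have hdisj : Disjoint (U \ S) W := Finset.sdiff_disjoint.mono_right hWS
  have hTcard : T.card = a := by
    rw [hT, Finset.card_union_of_disjoint hdisj, Finset.card_sdiff_of_subset hSU]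
    omega
  have hunion : S ∪ T = U := by
    rw [hT, ← Finset.union_assoc, Finset.union_sdiff_of_subset hSU,
      Finset.union_eq_left.2 (hWS.trans hSU)]
  have hinter : S ∩ T = W := by
    rw [hT, Finset.inter_union_distrib_left, Finset.inter_sdiff_self,
      Finset.empty_union, Finset.inter_eq_right.2 hWS]
  refine ⟨(S, T), ?_, hunion⟩
  simp only [pairFiber, Finset.coe_filter, Set.mem_setOf_eq, Finset.mem_product,
    Finset.mem_powersetCard]
  exact ⟨⟨⟨Finset.subset_univ _, hScard⟩, Finset.subset_univ _, hTcard⟩, by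
    rw [hinter]; exact hWcard⟩

/-! ### Variance bounds -/

lemma variance_eq_fiber (hp0 : 0 ≤ p) (hp1 : p ≤ 1) (j : ℕ) :
    variance (fun ω => (cliqueCount n j ω : ℝ)) (erMeasure n p)
      = ∑ st ∈ (Finset.powersetCard (j + 1) (Finset.univ : Finset (Fin n))
          ×ˢ Finset.powersetCard (j + 1) (Finset.univ : Finset (Fin n))),
          (p ^ (2 * ((j + 1).choose 2) - ((st.1 ∩ st.2).card).choose 2)
            - p ^ (2 * ((j + 1).choose 2))) := by
  rw [variance_cliqueCount hp0 hp1 j, ← Finset.sum_product']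
  refine Finset.sum_congr rfl fun st hst => ?_
  rw [Finset.mem_product, Finset.mem_powersetCard, Finset.mem_powersetCard] at hst
  obtain ⟨⟨-, hS⟩, -, hT⟩ := hst
  have hm : (st.1 ∩ st.2).card ≤ j + 1 :=
    le_trans (Finset.card_le_card Finset.inter_subset_left) hS.le
  have hch : ((st.1 ∩ st.2).card).choose 2 ≤ (j + 1).choose 2 := Nat.choose_le_choose 2 hm
  have hu := card_edgesOf_union st.1 st.2
  rw [card_edgesOf, card_edgesOf, hS, hT] at hu
  have h1 : (edgesOf st.1 ∪ edgesOf st.2).card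
      = 2 * ((j + 1).choose 2) - ((st.1 ∩ st.2).card).choose 2 := by omega
  have h2 : (edgesOf st.1).card + (edgesOf st.2).card = 2 * ((j + 1).choose 2) := by
    rw [card_edgesOf, card_edgesOf, hS, hT]; ring
  rw [h1, h2]

lemma variance_le (hp0 : 0 ≤ p) (hp1 : p ≤ 1) (j : ℕ) :
    variance (fun ω => (cliqueCount n j ω : ℝ)) (erMeasure n p)
      ≤ ∑ m ∈ Finset.Icc 2 (j + 1),
          (n : ℝ) ^ (2 * (j + 1) - m) * p ^ (2 * ((j + 1).choose 2) - m.choose 2) := by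
  rw [variance_eq_fiber hp0 hp1 j]
  rw [← Finset.sum_fiberwise_of_maps_to (g := fun st => (st.1 ∩ st.2).card)
    (t := Finset.Icc 0 (j + 1)) (fun st hst => by
      rw [Finset.mem_product, Finset.mem_powersetCard] at hst
      exact Finset.mem_Icc.2 ⟨Nat.zero_le _,
        le_trans (Finset.card_le_card Finset.inter_subset_left) hst.1.2.le⟩)]
  rw [← Finset.sum_subset (Finset.Icc_subset_Icc (Nat.zero_le 2) le_rfl)
    (fun m hm1 hm2 => Finset.sum_eq_zero fun st hst => by
      rw [Finset.mem_filter] at hst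
      rw [hst.2]
      rw [Finset.mem_Icc] at hm1 hm2
      have : m < 2 := by omega
      rw [Nat.choose_eq_zero_of_lt this, Nat.sub_zero, sub_self])]
  apply Finset.sum_le_sum
  intro m hm
  rw [Finset.mem_Icc] at hm
  have hcard := pairFiber_card_le (n := n) (j + 1) m hm.2
  calc (∑ st ∈ (Finset.powersetCard (j + 1) (Finset.univ : Finset (Fin n))
          ×ˢ Finset.powersetCard (j + 1) (Finset.univ : Finset (Fin n))).filter
            (fun st => (st.1 ∩ st.2).card = m),
          (p ^ (2 * ((j + 1).choose 2) - ((st.1 ∩ st.2).card).choose 2)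
            - p ^ (2 * ((j + 1).choose 2))))
      ≤ ((Finset.powersetCard (j + 1) (Finset.univ : Finset (Fin n))
          ×ˢ Finset.powersetCard (j + 1) (Finset.univ : Finset (Fin n))).filter
            (fun st => (st.1 ∩ st.2).card = m)).card
          • (p ^ (2 * ((j + 1).choose 2) - m.choose 2)) := by
        apply Finset.sum_le_card_nsmul
        intro st hst
        rw [Finset.mem_filter] at hst
        rw [hst.2]
        exact sub_le_self _ (pow_nonneg hp0 _)
    _ ≤ (n : ℝ) ^ (2 * (j + 1) - m) * p ^ (2 * ((j + 1).choose 2) - m.choose 2) := by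
        rw [nsmul_eq_mul]
        apply mul_le_mul_of_nonneg_right _ (pow_nonneg hp0 _)
        calc (((Finset.powersetCard (j + 1) (Finset.univ : Finset (Fin n))
            ×ˢ Finset.powersetCard (j + 1) (Finset.univ : Finset (Fin n))).filter
              (fun st => (st.1 ∩ st.2).card = m)).card : ℝ)
            ≤ ((n ^ (2 * (j + 1) - m) : ℕ) : ℝ) := Nat.cast_le.2 hcard
          _ = (n : ℝ) ^ (2 * (j + 1) - m) := by push_cast; ring

lemma variance_ge (hp0 : 0 ≤ p) (hp1 : p ≤ 1) (j m : ℕ) (hm2 : 2 ≤ m) (hmj : m ≤ j + 1) :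
    (n.choose (2 * (j + 1) - m) : ℝ) * ((1 - p) * p ^ (2 * ((j + 1).choose 2) - m.choose 2))
      ≤ variance (fun ω => (cliqueCount n j ω : ℝ)) (erMeasure n p) := by
  rw [variance_eq_fiber hp0 hp1 j]
  have hchK : m.choose 2 ≤ (j + 1).choose 2 := Nat.choose_le_choose 2 hmj
  have hch1 : 1 ≤ m.choose 2 := Nat.choose_le_choose 2 hm2
  have hbound : ∀ st ∈ pairFiber n (j + 1) m,
      (1 - p) * p ^ (2 * ((j + 1).choose 2) - m.choose 2)
        ≤ p ^ (2 * ((j + 1).choose 2) - ((st.1 ∩ st.2).card).choose 2)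
          - p ^ (2 * ((j + 1).choose 2)) := by
    intro st hst
    rw [pairFiber, Finset.mem_filter] at hst
    rw [hst.2]
    have heq : p ^ (2 * ((j + 1).choose 2))
        = p ^ (2 * ((j + 1).choose 2) - m.choose 2) * p ^ (m.choose 2) := by
      rw [← pow_add]; congr 1; omega
    rw [heq, ← mul_one_sub, mul_comm (1 - p)]
    apply mul_le_mul_of_nonneg_left _ (pow_nonneg hp0 _)
    have : p ^ (m.choose 2) ≤ p ^ 1 := pow_le_pow_of_le_one hp0 hp1 hch1
    rw [pow_one] at this
    linarith
  calc (n.choose (2 * (j + 1) - m) : ℝ)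
        * ((1 - p) * p ^ (2 * ((j + 1).choose 2) - m.choose 2))
      ≤ ((pairFiber n (j + 1) m).card : ℝ)
        * ((1 - p) * p ^ (2 * ((j + 1).choose 2) - m.choose 2)) := by
        apply mul_le_mul_of_nonneg_right (Nat.cast_le.2 (pairFiber_card_ge (j + 1) m hmj))
        exact mul_nonneg (by linarith) (pow_nonneg hp0 _)
    _ ≤ ∑ st ∈ pairFiber n (j + 1) m,
          (p ^ (2 * ((j + 1).choose 2) - ((st.1 ∩ st.2).card).choose 2)
            - p ^ (2 * ((j + 1).choose 2))) := by
        rw [← nsmul_eq_mul]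
        exact Finset.card_nsmul_le_sum _ _ _ hbound
    _ ≤ _ := Finset.sum_le_sum_of_subset_of_nonneg (Finset.filter_subset _ _)
        (fun st _ _ => sub_nonneg.2 (pow_le_pow_of_le_one hp0 hp1 (Nat.sub_le _ _)))

/-! ### A standard-deviation triangle inequality on a finite probability space -/

section FinOmega

variable {Ω : Type*} [Fintype Ω] [MeasurableSpace Ω] [MeasurableSingletonClass Ω]
  (μ : Measure Ω) [IsProbabilityMeasure μ]

lemma memLp_fin (f : Ω → ℝ) : MemLp f 2 μ := by
  obtain ⟨C, hC⟩ := Finite.exists_le (fun ω => ‖f ω‖)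
  exact MemLp.of_bound (measurable_of_countable f).aestronglyMeasurable C
    (Filter.Eventually.of_forall hC)

lemma integrable_fin (f : Ω → ℝ) : Integrable f μ :=
  (memLp_fin μ f).integrable one_le_two

lemma variance_eq_sum (X : Ω → ℝ) :
    variance X μ = ∑ ω, (μ {ω}).toReal * (X ω - ∫ x, X x ∂μ) ^ 2 := by
  rw [variance_eq_integral (memLp_fin μ X).aemeasurable, integral_fintype (integrable_fin μ _)]
  simp [smul_eq_mul, measureReal_def]

lemma sqrt_variance_add_le (X Y : Ω → ℝ) :
    Real.sqrt (variance (fun ω => X ω + Y ω) μ)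
      ≤ Real.sqrt (variance X μ) + Real.sqrt (variance Y μ) := by
  have hEadd : ∫ x, (X x + Y x) ∂μ = (∫ x, X x ∂μ) + ∫ x, Y x ∂μ :=
    integral_add (integrable_fin μ _) (integrable_fin μ _)
  have key : variance (fun ω => X ω + Y ω) μ
      ≤ (Real.sqrt (variance X μ) + Real.sqrt (variance Y μ)) ^ 2 := by
    rw [variance_eq_sum μ, hEadd]
    have expand : ∀ ω : Ω, (μ {ω}).toReal * (X ω + Y ω - ((∫ x, X x ∂μ) + ∫ x, Y x ∂μ)) ^ 2
        = (μ {ω}).toReal * (X ω - ∫ x, X x ∂μ) ^ 2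
          + 2 * ((Real.sqrt (μ {ω}).toReal * (X ω - ∫ x, X x ∂μ))
              * (Real.sqrt (μ {ω}).toReal * (Y ω - ∫ x, Y x ∂μ)))
          + (μ {ω}).toReal * (Y ω - ∫ x, Y x ∂μ) ^ 2 := by
      intro ω
      have hw : Real.sqrt (μ {ω}).toReal * Real.sqrt (μ {ω}).toReal = (μ {ω}).toReal :=
        Real.mul_self_sqrt ENNReal.toReal_nonneg
      nlinarith [hw]
    rw [Finset.sum_congr rfl (fun ω _ => expand ω), Finset.sum_add_distrib,
      Finset.sum_add_distrib, ← Finset.mul_sum]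
    have hcs := Real.sum_mul_le_sqrt_mul_sqrt Finset.univ
      (fun ω => Real.sqrt (μ {ω}).toReal * (X ω - ∫ x, X x ∂μ))
      (fun ω => Real.sqrt (μ {ω}).toReal * (Y ω - ∫ x, Y x ∂μ))
    have hsq : ∀ (Z : Ω → ℝ), ∀ ω : Ω,
        (Real.sqrt (μ {ω}).toReal * (Z ω - ∫ x, Z x ∂μ)) ^ 2
          = (μ {ω}).toReal * (Z ω - ∫ x, Z x ∂μ) ^ 2 := by
      intro Z ω
      rw [mul_pow, Real.sq_sqrt ENNReal.toReal_nonneg]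
    rw [Finset.sum_congr rfl (fun ω _ => hsq X ω), Finset.sum_congr rfl (fun ω _ => hsq Y ω)]
      at hcs
    rw [← variance_eq_sum μ X, ← variance_eq_sum μ Y] at hcs ⊢
    have h1 : Real.sqrt (variance X μ) ^ 2 = variance X μ :=
      Real.sq_sqrt (variance_nonneg _ _)
    have h2 : Real.sqrt (variance Y μ) ^ 2 = variance Y μ :=
      Real.sq_sqrt (variance_nonneg _ _)
    nlinarith [hcs]
  calc Real.sqrt (variance (fun ω => X ω + Y ω) μ)
      ≤ Real.sqrt ((Real.sqrt (variance X μ) + Real.sqrt (variance Y μ)) ^ 2) :=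
        Real.sqrt_le_sqrt key
    _ = Real.sqrt (variance X μ) + Real.sqrt (variance Y μ) :=
        Real.sqrt_sq (by positivity)

lemma variance_const' (c : ℝ) : variance (fun _ : Ω => c) μ = 0 := by
  rw [variance_eq_sum μ]
  rw [integral_const, probReal_univ, one_smul]
  simp

end FinOmega

lemma cliqueCount_zero_eq (n : ℕ) (ω : Sym2 (Fin n) → Bool) : cliqueCount n 0 ω = n := by
  rw [cliqueCount]
  rw [Finset.filter_true_of_mem]
  · rw [Finset.card_powersetCard, Finset.card_univ, Fintype.card_fin, Nat.choose_one_right]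
  · intro S hS
    rw [Finset.mem_powersetCard] at hS
    obtain ⟨a, rfl⟩ := Finset.card_eq_one.1 hS.2
    intro i hi i' hi' hne
    rw [Finset.mem_singleton] at hi hi'
    exact absurd (hi.trans hi'.symm) hne

/-! ### Asymptotics -/

/-- variance of the number of `j`-faces at time `n` -/
noncomputable def Vk (p : ℕ → ℝ) (j n : ℕ) : ℝ :=
  variance (fun ω => (cliqueCount n j ω : ℝ)) (erMeasure n (p n))

lemma Vk_nonneg (p : ℕ → ℝ) (j n : ℕ) : 0 ≤ Vk p j n := variance_nonneg _ _

lemma p_tendsto_zero {k : ℕ} {p : ℕ → ℝ} (hp : ∀ n, 0 < p n ∧ p n < 1)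
    (h1 : Tendsto (fun n : ℕ => (n : ℝ) * p n ^ k) atTop atTop)
    (h2 : Tendsto (fun n : ℕ => (n : ℝ) * p n ^ (k + 1)) atTop (𝓝 0)) :
    Tendsto p atTop (𝓝 0) := by
  have hev : (fun n : ℕ => ((n : ℝ) * p n ^ (k + 1)) / ((n : ℝ) * p n ^ k)) =ᶠ[atTop] p := by
    filter_upwards [eventually_ge_atTop 1] with n hn
    have hn0 : (n : ℝ) ≠ 0 := Nat.cast_ne_zero.2 (by omega)
    have hp0 : p n ≠ 0 := ne_of_gt (hp n).1
    rw [pow_succ]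
    field_simp
  exact Tendsto.congr' hev (h2.div_atTop h1)

lemma tendsto_ratio_cast (r : ℕ) :
    Tendsto (fun n : ℕ => (n : ℝ) / ((n + 1 - r : ℕ) : ℝ)) atTop (𝓝 1) := by
  have hreal : Tendsto (fun x : ℝ => x / (x + (1 - (r : ℝ)))) atTop (𝓝 1) := by
    have hd : Tendsto (fun x : ℝ => x + (1 - (r : ℝ))) atTop atTop :=
      tendsto_atTop_add_const_right _ _ tendsto_id
    have h0 : Tendsto (fun x : ℝ => (1 - (r : ℝ)) / (x + (1 - (r : ℝ)))) atTop (𝓝 0) :=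
      tendsto_const_nhds.div_atTop hd
    have h1' : Tendsto (fun x : ℝ => 1 - (1 - (r : ℝ)) / (x + (1 - (r : ℝ)))) atTop
        (𝓝 (1 - 0)) := tendsto_const_nhds.sub h0
    rw [sub_zero] at h1'
    refine h1'.congr' ?_
    filter_upwards [eventually_gt_atTop ((r : ℝ))] with x hx
    have hx0 : x + (1 - (r : ℝ)) ≠ 0 := by linarith
    field_simp
    ring
  have hcomp := hreal.comp (tendsto_natCast_atTop_atTop (R := ℝ))
  refine hcomp.congr' ?_
  filter_upwards [eventually_ge_atTop r] with n hn
  have hcast : ((n + 1 - r : ℕ) : ℝ) = (n : ℝ) + (1 - (r : ℝ)) := by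
    have : r ≤ n + 1 := by omega
    push_cast [Nat.cast_sub this]
    ring
  simp only [Function.comp_apply, hcast]

lemma ratio_evEq (p : ℕ → ℝ) (hp : ∀ n, 0 < p n ∧ p n < 1) (c r d e : ℕ)
    (hcr : r ≤ c) (hde : e ≤ d) :
    (fun n : ℕ => ((n : ℝ) ^ c * p n ^ d) / ((n : ℝ) ^ r * p n ^ e))
      =ᶠ[atTop] (fun n : ℕ => (n : ℝ) ^ (c - r) * p n ^ (d - e)) := by
  filter_upwards [eventually_ge_atTop 1] with n hn
  have hX : (n : ℝ) ≠ 0 := Nat.cast_ne_zero.2 (by omega)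
  have hP : p n ≠ 0 := ne_of_gt (hp n).1
  rw [pow_sub₀ _ hX hcr, pow_sub₀ _ hP hde]
  field_simp <;> ring

lemma ratio_evEq' (p : ℕ → ℝ) (hp : ∀ n, 0 < p n ∧ p n < 1) (c r d e : ℕ)
    (hcr : c ≤ r) (hde : d ≤ e) :
    (fun n : ℕ => ((n : ℝ) ^ c * p n ^ d) / ((n : ℝ) ^ r * p n ^ e))
      =ᶠ[atTop] (fun n : ℕ => ((n : ℝ) ^ (r - c) * p n ^ (e - d))⁻¹) := by
  filter_upwards [eventually_ge_atTop 1] with n hn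
  have hX : (n : ℝ) ≠ 0 := Nat.cast_ne_zero.2 (by omega)
  have hP : p n ≠ 0 := ne_of_gt (hp n).1
  rw [pow_sub₀ _ hX hcr, pow_sub₀ _ hP hde]
  field_simp <;> ring

lemma master {k : ℕ} (p : ℕ → ℝ) (hp : ∀ n, 0 < p n ∧ p n < 1)
    (hp0 : Tendsto p atTop (𝓝 0))
    (m' : ℕ) (hm'2 : 2 ≤ m') (hm'k : m' ≤ k + 1) (U : ℕ → ℝ) (hU0 : ∀ n, 0 ≤ U n)
    (hcomp : Tendsto (fun n : ℕ => U n / ((n : ℝ) ^ (2 * (k + 1) - m')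
        * p n ^ (2 * ((k + 1).choose 2) - m'.choose 2))) atTop (𝓝 0)) :
    Tendsto (fun n : ℕ => U n / Vk p k n) atTop (𝓝 0) := by
  set r := 2 * (k + 1) - m' with hr
  set e := 2 * ((k + 1).choose 2) - m'.choose 2 with he
  set g : ℕ → ℝ := fun n => (2 * (Nat.factorial r : ℝ))
    * (((n : ℝ) / ((n + 1 - r : ℕ) : ℝ)) ^ r * (U n / ((n : ℝ) ^ r * p n ^ e))) with hg
  have hgt : Tendsto g atTop (𝓝 0) := by
    have base := (tendsto_const_nhds (x := (2 * (Nat.factorial r : ℝ))) (f := atTop)).mul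
      (((tendsto_ratio_cast r).pow r).mul hcomp)
    simpa using base
  apply squeeze_zero' (Filter.Eventually.of_forall
    (fun n => div_nonneg (hU0 n) (Vk_nonneg p k n))) _ hgt
  have hps : ∀ᶠ n : ℕ in atTop, p n ≤ 1 / 2 :=
    hp0.eventually (eventually_le_nhds (by norm_num))
  filter_upwards [eventually_ge_atTop (r + 1), hps] with n hn hpn
  have hp01 : 0 < p n := (hp n).1
  have hp1 : p n < 1 := (hp n).2
  have hhalf : (1 : ℝ) / 2 ≤ 1 - p n := by linarith
  set A : ℝ := ((n + 1 - r : ℕ) : ℝ) with hA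
  have hApos : 0 < A := by
    have hA1 : 0 < n + 1 - r := by omega
    rw [hA]
    exact_mod_cast Nat.cast_pos.2 hA1
  have hrfac : (0 : ℝ) < (Nat.factorial r : ℝ) := by exact_mod_cast Nat.factorial_pos r
  set Q : ℝ := A ^ r / (Nat.factorial r : ℝ) * ((1 - p n) * p n ^ e) with hQ
  have hQpos : 0 < Q := by
    apply mul_pos (div_pos (pow_pos hApos r) hrfac)
    exact mul_pos (by linarith) (pow_pos hp01 e)
  have hQle : Q ≤ Vk p k n := by
    have hchoose : A ^ r / (Nat.factorial r : ℝ) ≤ (n.choose r : ℝ) := by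
      have := Nat.pow_le_choose (α := ℝ) r n
      rw [hA]
      push_cast at this ⊢
      exact this
    calc Q ≤ (n.choose r : ℝ) * ((1 - p n) * p n ^ e) := by
          apply mul_le_mul_of_nonneg_right hchoose
          exact mul_nonneg (by linarith) (pow_nonneg hp01.le _)
      _ ≤ Vk p k n := variance_ge hp01.le hp1.le k m' hm'2 hm'k
  set Q2 : ℝ := A ^ r / (Nat.factorial r : ℝ) * (1 / 2 * p n ^ e) with hQ2
  have hQ2pos : 0 < Q2 := by
    apply mul_pos (div_pos (pow_pos hApos r) hrfac)
    exact mul_pos (by norm_num) (pow_pos hp01 e)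
  have hQ2le : Q2 ≤ Q := by
    apply mul_le_mul_of_nonneg_left _ (le_of_lt (div_pos (pow_pos hApos r) hrfac))
    exact mul_le_mul_of_nonneg_right hhalf (pow_nonneg hp01.le _)
  calc U n / Vk p k n ≤ U n / Q := div_le_div_of_nonneg_left (hU0 n) hQpos hQle
    _ ≤ U n / Q2 := div_le_div_of_nonneg_left (hU0 n) hQ2pos hQ2le
    _ = g n := by
        rw [hQ2, hg]
        simp only [← hA]
        have hA0 : A ≠ 0 := hApos.ne'
        have hX : (n : ℝ) ≠ 0 := Nat.cast_ne_zero.2 (by omega)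
        have hP : p n ≠ 0 := ne_of_gt hp01
        field_simp
        ring
        rw [inv_pow, mul_assoc, mul_inv_cancel₀ (pow_ne_zero r hA0), mul_one]

lemma Vk_pos {k : ℕ} (hk : 1 ≤ k) (p : ℕ → ℝ) (hp : ∀ n, 0 < p n ∧ p n < 1) :
    ∀ᶠ n : ℕ in atTop, 0 < Vk p k n := by
  filter_upwards [eventually_ge_atTop (2 * (k + 1))] with n hn
  have hge := variance_ge (n := n) (p := p n) (hp n).1.le (hp n).2.le k 2 le_rfl
    (by omega : (2:ℕ) ≤ k + 1)
  refine lt_of_lt_of_le ?_ hge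
  have hch : 0 < n.choose (2 * (k + 1) - 2) := Nat.choose_pos (by omega)
  apply mul_pos (by exact_mod_cast hch)
  exact mul_pos (by linarith [(hp n).2]) (pow_pos (hp n).1 _)

lemma combine {k : ℕ} (hk : 1 ≤ k) (p : ℕ → ℝ) (hp : ∀ n, 0 < p n ∧ p n < 1) (j : ℕ)
    (hm : ∀ m ∈ Finset.Icc 2 (j + 1),
      Tendsto (fun n : ℕ => (n : ℝ) ^ (2 * (j + 1) - m)
        * p n ^ (2 * ((j + 1).choose 2) - m.choose 2) / Vk p k n) atTop (𝓝 0)) :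
    Tendsto (fun n : ℕ => Vk p j n / Vk p k n) atTop (𝓝 0) := by
  apply squeeze_zero' (g := fun n : ℕ => ∑ m ∈ Finset.Icc 2 (j + 1),
      (n : ℝ) ^ (2 * (j + 1) - m) * p n ^ (2 * ((j + 1).choose 2) - m.choose 2) / Vk p k n)
  · exact Filter.Eventually.of_forall fun n => div_nonneg (Vk_nonneg p j n) (Vk_nonneg p k n)
  · filter_upwards [Vk_pos hk p hp] with n hv
    rw [← Finset.sum_div]
    exact (div_le_div_iff_of_pos_right hv).2 (variance_le (hp n).1.le (hp n).2.le j)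
  · simpa using tendsto_finset_sum _ hm

lemma varRatio_A {k : ℕ} (hk : 1 ≤ k) (p : ℕ → ℝ) (hp : ∀ n, 0 < p n ∧ p n < 1)
    (h1 : Tendsto (fun n : ℕ => (n : ℝ) * p n ^ k) atTop atTop)
    (h2 : Tendsto (fun n : ℕ => (n : ℝ) * p n ^ (k + 1)) atTop (𝓝 0)) :
    Tendsto (fun n : ℕ => Vk p (k + 1) n / Vk p k n) atTop (𝓝 0) := by
  have hp0 := p_tendsto_zero hp h1 h2
  apply combine hk p hp (k + 1)
  intro m hm
  rw [Finset.mem_Icc] at hm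
  obtain ⟨hm2, hmk⟩ := hm
  have hK1 : (k + 1 + 1).choose 2 = (k + 1) + (k + 1).choose 2 := by
    rw [Nat.choose_succ_succ (k + 1) 1, Nat.choose_one_right]
  have hKpos : 1 ≤ (k + 1).choose 2 := by
    have h22 : (2 : ℕ).choose 2 = 1 := rfl
    calc 1 = (2 : ℕ).choose 2 := h22.symm
      _ ≤ (k + 1).choose 2 := Nat.choose_le_choose 2 (by omega)
  rcases lt_or_ge m 4 with h4 | h4
  · interval_cases m
    · -- m = 2
      apply master p hp hp0 2 le_rfl (by omega)
      · exact fun n => mul_nonneg (pow_nonneg (Nat.cast_nonneg n) _)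
          (pow_nonneg (hp n).1.le _)
      refine Tendsto.congr' (ratio_evEq p hp _ _ _ _ (by omega) (by omega)).symm ?_
      have hc : 2 * (k + 1 + 1) - 2 - (2 * (k + 1) - 2) = 2 := by omega
      have h22 : (2 : ℕ).choose 2 = 1 := rfl
      have hd : (2 * ((k + 1 + 1).choose 2) - (2 : ℕ).choose 2)
          - (2 * ((k + 1).choose 2) - (2 : ℕ).choose 2) = 2 * k + 2 := by
        rw [h22]; omega
      rw [hc, hd]
      have hlim := h2.mul h2
      rw [mul_zero] at hlim
      refine hlim.congr fun n => ?_
      ring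
    · -- m = 3
      apply master p hp hp0 2 le_rfl (by omega)
      · exact fun n => mul_nonneg (pow_nonneg (Nat.cast_nonneg n) _)
          (pow_nonneg (hp n).1.le _)
      refine Tendsto.congr' (ratio_evEq p hp _ _ _ _ (by omega) ?_).symm ?_
      · have h32 : (3 : ℕ).choose 2 = 3 := rfl
        have h22 : (2 : ℕ).choose 2 = 1 := rfl
        omega
      have hc : 2 * (k + 1 + 1) - 3 - (2 * (k + 1) - 2) = 1 := by omega
      have h32 : (3 : ℕ).choose 2 = 3 := rfl
      have h22 : (2 : ℕ).choose 2 = 1 := rfl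
      have hd : (2 * ((k + 1 + 1).choose 2) - (3 : ℕ).choose 2)
          - (2 * ((k + 1).choose 2) - (2 : ℕ).choose 2) = 2 * k := by
        rw [h32, h22]; omega
      rw [hc, hd]
      -- `n * p n ^ (2k) → 0` by comparison with `n * p n ^ (k+1)`
      apply squeeze_zero' (f := fun n : ℕ => (n : ℝ) ^ 1 * p n ^ (2 * k))
        (g := fun n : ℕ => (n : ℝ) * p n ^ (k + 1))
      · exact Filter.Eventually.of_forall fun n =>
          mul_nonneg (pow_nonneg (Nat.cast_nonneg n) _) (pow_nonneg (hp n).1.le _)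
      · filter_upwards [hp0.eventually (eventually_le_nhds (by norm_num : (0:ℝ) < 1))]
          with n hpn
        rw [pow_one]
        apply mul_le_mul_of_nonneg_left _ (Nat.cast_nonneg n)
        exact pow_le_pow_of_le_one (hp n).1.le hpn (by omega)
      · exact h2
  · -- 4 ≤ m
    obtain ⟨t, rfl⟩ : ∃ t, m = t + 4 := ⟨m - 4, by omega⟩
    have hch : (t + 4).choose 2 = (t + 2).choose 2 + (2 * t + 5) := by
      rw [show t + 4 = (t + 3) + 1 from rfl, Nat.choose_succ_succ (t + 3) 1,
        show t + 3 = (t + 2) + 1 from rfl, Nat.choose_succ_succ (t + 2) 1,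
        Nat.choose_one_right, Nat.choose_one_right]
      ring
    have hchle : (t + 2).choose 2 ≤ (k + 1).choose 2 := Nat.choose_le_choose 2 (by omega)
    apply master p hp hp0 (t + 2) (by omega) (by omega)
    · exact fun n => mul_nonneg (pow_nonneg (Nat.cast_nonneg n) _)
        (pow_nonneg (hp n).1.le _)

    refine Tendsto.congr' (ratio_evEq p hp _ _ _ _ (by omega) (by omega)).symm ?_
    have hc : 2 * (k + 1 + 1) - (t + 4) - (2 * (k + 1) - (t + 2)) = 0 := by omega
    rw [hc]
    have hE1 : 1 ≤ (2 * ((k + 1 + 1).choose 2) - (t + 4).choose 2)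
        - (2 * ((k + 1).choose 2) - (t + 2).choose 2) := by
      have : (k + 1 + 1).choose 2 = (k + 1) + (k + 1).choose 2 := hK1
      omega
    have hE := hp0.pow ((2 * ((k + 1 + 1).choose 2) - (t + 4).choose 2)
        - (2 * ((k + 1).choose 2) - (t + 2).choose 2))
    rw [zero_pow (by omega)] at hE
    refine hE.congr fun n => ?_
    rw [pow_zero, one_mul]

lemma varRatio_B {k : ℕ} (hk : 1 ≤ k) (p : ℕ → ℝ) (hp : ∀ n, 0 < p n ∧ p n < 1)
    (h1 : Tendsto (fun n : ℕ => (n : ℝ) * p n ^ k) atTop atTop)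
    (h2 : Tendsto (fun n : ℕ => (n : ℝ) * p n ^ (k + 1)) atTop (𝓝 0)) :
    Tendsto (fun n : ℕ => Vk p (k - 1) n / Vk p k n) atTop (𝓝 0) := by
  have hp0 := p_tendsto_zero hp h1 h2
  rcases eq_or_lt_of_le hk with hk1 | hk2
  · -- k = 1
    have h0 : ∀ n, Vk p (k - 1) n = 0 := by
      intro n
      rw [Vk, ← hk1]
      have hfun : (fun ω : Sym2 (Fin n) → Bool => ((cliqueCount n (1 - 1) ω : ℝ)))
          = fun _ => (n : ℝ) := funext fun ω => by rw [show (1:ℕ) - 1 = 0 from rfl,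
            cliqueCount_zero_eq]
      rw [hfun, variance_const']
    simp only [h0, zero_div]
    exact tendsto_const_nhds
  · -- 2 ≤ k
    have hkk : k - 1 + 1 = k := by omega
    have hBlim : Tendsto (fun n : ℕ => (((n : ℝ) ^ 2 * p n ^ (2 * k)))⁻¹) atTop (𝓝 0) := by
      have hsq : Tendsto (fun n : ℕ => ((n : ℝ) * p n ^ k) ^ 2) atTop atTop :=
        (tendsto_pow_atTop (by norm_num : 2 ≠ 0)).comp h1
      have hinv := hsq.inv_tendsto_atTop
      refine hinv.congr fun n => ?_
      simp only [Pi.inv_apply]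
      congr 1
      ring
    apply combine hk p hp (k - 1)
    intro m hm'
    rw [Finset.mem_Icc, hkk] at hm'
    rw [hkk]
    have hK : (k + 1).choose 2 = k + k.choose 2 := by
      rw [Nat.choose_succ_succ k 1, Nat.choose_one_right]
    have hchle : m.choose 2 ≤ k.choose 2 := Nat.choose_le_choose 2 hm'.2
    apply master p hp hp0 m hm'.1 (by omega)
    · exact fun n => mul_nonneg (pow_nonneg (Nat.cast_nonneg n) _)
        (pow_nonneg (hp n).1.le _)

    refine Tendsto.congr' (ratio_evEq' p hp _ _ _ _ (by omega) (by omega)).symm ?_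
    have hc : 2 * (k + 1) - m - (2 * k - m) = 2 := by omega
    have hd : (2 * ((k + 1).choose 2) - m.choose 2) - (2 * (k.choose 2) - m.choose 2)
        = 2 * k := by omega
    rw [hc, hd]
    exact hBlim

lemma variance_neg {Ω : Type*} [MeasurableSpace Ω] (μ : Measure Ω) (X : Ω → ℝ) :
    variance (fun ω => -X ω) μ = variance X μ := by
  have h := variance_const_mul (-1 : ℝ) X μ
  have hfun : (fun ω => -X ω) = fun ω => (-1 : ℝ) * X ω := funext fun ω => by ring
  rw [hfun, h]
  norm_num

lemma final_ratio {v v0 v1 w : ℕ → ℝ}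
    (hv0 : ∀ n, 0 ≤ v0 n) (hv1 : ∀ n, 0 ≤ v1 n) (hw : ∀ n, 0 ≤ w n)
    (hvpos : ∀ᶠ n : ℕ in atTop, 0 < v n)
    (h0 : Tendsto (fun n => v0 n / v n) atTop (𝓝 0))
    (h1 : Tendsto (fun n => v1 n / v n) atTop (𝓝 0))
    (tri1 : ∀ n, Real.sqrt (w n) ≤ Real.sqrt (v n) + (Real.sqrt (v0 n) + Real.sqrt (v1 n)))
    (tri2 : ∀ n, Real.sqrt (v n) ≤ Real.sqrt (w n) + (Real.sqrt (v0 n) + Real.sqrt (v1 n))) :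
    Tendsto (fun n => v n / w n) atTop (𝓝 1) := by
  set s : ℕ → ℝ := fun n => Real.sqrt (v0 n / v n) + Real.sqrt (v1 n / v n) with hs
  have hstend : Tendsto s atTop (𝓝 0) := by
    have := (h0.sqrt).add (h1.sqrt)
    simpa using this
  set y : ℕ → ℝ := fun n => Real.sqrt (w n) / Real.sqrt (v n) with hy
  have hupper : ∀ᶠ n : ℕ in atTop, y n ≤ 1 + s n := by
    filter_upwards [hvpos] with n hv
    have hsv : 0 < Real.sqrt (v n) := Real.sqrt_pos.2 hv
    calc y n ≤ (Real.sqrt (v n) + (Real.sqrt (v0 n) + Real.sqrt (v1 n))) / Real.sqrt (v n) :=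
          (div_le_div_iff_of_pos_right hsv).2 (tri1 n)
      _ = 1 + (Real.sqrt (v0 n) / Real.sqrt (v n) + Real.sqrt (v1 n) / Real.sqrt (v n)) := by
          rw [add_div, div_self (ne_of_gt hsv), add_div]
      _ = 1 + s n := by
          rw [hs]
          simp only [Real.sqrt_div (hv0 n), Real.sqrt_div (hv1 n)]
  have hlower : ∀ᶠ n : ℕ in atTop, 1 - s n ≤ y n := by
    filter_upwards [hvpos] with n hv
    have hsv : 0 < Real.sqrt (v n) := Real.sqrt_pos.2 hv
    have h := (div_le_div_iff_of_pos_right hsv).2 (tri2 n)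
    rw [div_self (ne_of_gt hsv), add_div, add_div] at h
    have e0 : Real.sqrt (v0 n) / Real.sqrt (v n) = Real.sqrt (v0 n / v n) :=
      (Real.sqrt_div (hv0 n) _).symm
    have e1 : Real.sqrt (v1 n) / Real.sqrt (v n) = Real.sqrt (v1 n / v n) :=
      (Real.sqrt_div (hv1 n) _).symm
    rw [e0, e1] at h
    have : y n = Real.sqrt (w n) / Real.sqrt (v n) := rfl
    rw [hs, this]
    linarith
  have hy1 : Tendsto y atTop (𝓝 1) := by
    have hup : Tendsto (fun n => 1 + s n) atTop (𝓝 (1 + 0)) := tendsto_const_nhds.add hstend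
    have hlo : Tendsto (fun n => 1 - s n) atTop (𝓝 (1 - 0)) := tendsto_const_nhds.sub hstend
    rw [add_zero] at hup
    rw [sub_zero] at hlo
    exact tendsto_of_tendsto_of_tendsto_of_le_of_le' hlo hup hlower hupper
  have hwv : Tendsto (fun n => w n / v n) atTop (𝓝 1) := by
    have hmul := hy1.mul hy1
    rw [mul_one] at hmul
    refine hmul.congr' ?_
    filter_upwards [hvpos] with n hv
    show y n * y n = w n / v n
    rw [hy]
    rw [div_mul_div_comm, Real.mul_self_sqrt (hw n), Real.mul_self_sqrt hv.le]
  have hinv := hwv.inv₀ one_ne_zero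
  rw [inv_one] at hinv
  refine hinv.congr fun n => ?_
  rw [inv_div]

lemma tri1 (p : ℕ → ℝ) (k n : ℕ) :
    Real.sqrt (variance (fun ω => -(cliqueCount n (k - 1) ω : ℝ) + (cliqueCount n k ω : ℝ)
        - (cliqueCount n (k + 1) ω : ℝ)) (erMeasure n (p n)))
      ≤ Real.sqrt (Vk p k n)
        + (Real.sqrt (Vk p (k - 1) n) + Real.sqrt (Vk p (k + 1) n)) := by
  have hfun : (fun ω : Sym2 (Fin n) → Bool => -(cliqueCount n (k - 1) ω : ℝ)
      + (cliqueCount n k ω : ℝ) - (cliqueCount n (k + 1) ω : ℝ))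
      = fun ω => (cliqueCount n k ω : ℝ)
          + (-(cliqueCount n (k - 1) ω : ℝ) + -(cliqueCount n (k + 1) ω : ℝ)) :=
    funext fun ω => by ring
  rw [hfun]
  refine le_trans (sqrt_variance_add_le _ _ _) ?_
  refine add_le_add_right (le_trans (sqrt_variance_add_le _ _ _) ?_) _
  rw [variance_neg, variance_neg]
  exact le_rfl

lemma tri2 (p : ℕ → ℝ) (k n : ℕ) :
    Real.sqrt (Vk p k n)
      ≤ Real.sqrt (variance (fun ω => -(cliqueCount n (k - 1) ω : ℝ)
          + (cliqueCount n k ω : ℝ) - (cliqueCount n (k + 1) ω : ℝ)) (erMeasure n (p n)))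
        + (Real.sqrt (Vk p (k - 1) n) + Real.sqrt (Vk p (k + 1) n)) := by
  have h := sqrt_variance_add_le (erMeasure n (p n))
    (fun ω => -(cliqueCount n (k - 1) ω : ℝ) + (cliqueCount n k ω : ℝ)
      - (cliqueCount n (k + 1) ω : ℝ))
    (fun ω => (cliqueCount n (k - 1) ω : ℝ) + (cliqueCount n (k + 1) ω : ℝ))
  have hfun : (fun ω : Sym2 (Fin n) → Bool => (-(cliqueCount n (k - 1) ω : ℝ)
        + (cliqueCount n k ω : ℝ) - (cliqueCount n (k + 1) ω : ℝ))
        + ((cliqueCount n (k - 1) ω : ℝ) + (cliqueCount n (k + 1) ω : ℝ)))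
      = fun ω => (cliqueCount n k ω : ℝ) := funext fun ω => by ring
  rw [hfun] at h
  refine le_trans h (add_le_add_right ?_ _)
  exact le_trans (sqrt_variance_add_le _ _ _) le_rfl

end ERProof

/-- for `k ≥ 1` and `p_n ∈ (0,1)` with `n·p_n^k → ∞` and `n·p_n^{k+1} → 0`,
`Var(f_k)/Var(f̃_k) → 1` where `f̃_k = -f_{k-1} + f_k - f_{k+1}`. -/
theorem variance_ratio_tilde (k : ℕ) (hk : 1 ≤ k) (p : ℕ → ℝ)
    (hp : ∀ n, 0 < p n ∧ p n < 1)
    (h1 : Tendsto (fun n : ℕ => (n : ℝ) * p n ^ k) atTop atTop)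
    (h2 : Tendsto (fun n : ℕ => (n : ℝ) * p n ^ (k + 1)) atTop (𝓝 0)) :
    Tendsto (fun n : ℕ =>
        variance (fun ω => (cliqueCount n k ω : ℝ)) (erMeasure n (p n)) /
        variance (fun ω =>
            -(cliqueCount n (k - 1) ω : ℝ) + (cliqueCount n k ω : ℝ)
              - (cliqueCount n (k + 1) ω : ℝ)) (erMeasure n (p n)))
      atTop (𝓝 1) := by
  exact ERProof.final_ratio
    (v := fun n => ERProof.Vk p k n)
    (v0 := fun n => ERProof.Vk p (k - 1) n)
    (v1 := fun n => ERProof.Vk p (k + 1) n)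
    (w := fun n => variance (fun ω =>
        -(cliqueCount n (k - 1) ω : ℝ) + (cliqueCount n k ω : ℝ)
          - (cliqueCount n (k + 1) ω : ℝ)) (erMeasure n (p n)))
    (fun n => ERProof.Vk_nonneg p (k - 1) n)
    (fun n => ERProof.Vk_nonneg p (k + 1) n)
    (fun n => variance_nonneg _ _)
    (ERProof.Vk_pos hk p hp)
    (ERProof.varRatio_B hk p hp h1 h2)
    (ERProof.varRatio_A hk p hp h1 h2)
    (fun n => ERProof.tri1 p k n)
    (fun n => ERProof.tri2 p k n)
end

section
/- Let G be a finite simple graph. Then the number of edges of G whose connected component in G contains at least 5 vertices is at most 4 times the number of subgraphs of G that are trees on 5 vertices, i.e. at most 4 times the number of pairs (W, F) where W is a 5-element set of vertices of G and F is a 4-element set of edges of G with both endpoints in W such that the graph (W, F) is connected (hence a tree). -/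
open scoped Classical
variable {V : Type} [Fintype V] [DecidableEq V] {G : SimpleGraph V}

lemma cross_edge {W : Finset V} : ∀ {a x : V}, G.Walk a x → a ∈ W → x ∉ W →
    ∃ u v, u ∈ W ∧ v ∉ W ∧ G.Adj u v
  | _, _, .nil, ha, hx => absurd ha hx
  | a, x, .cons (v := b) h q, ha, hx =>
    if hb : b ∈ W then cross_edge q hb hx else ⟨a, b, ha, hb, h⟩

lemma grow (a : V) (h5 : 5 ≤ {w : V | G.Reachable a w}.ncard) (e : Sym2 V)
    (he : e ∈ G.edgeFinset) (hae : a ∈ e) :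
    ∀ k, 2 ≤ k → k ≤ 5 → ∃ (W : Finset V) (F : Finset (Sym2 V)),
      W.card = k ∧ F.card = k - 1 ∧ F ⊆ G.edgeFinset ∧ e ∈ F ∧
      (∀ e' ∈ F, ∀ v ∈ e', v ∈ W) ∧ (∀ u ∈ W, G.Reachable a u) ∧
      (∀ u ∈ W, ∀ v ∈ W, (SimpleGraph.fromEdgeSet (F : Set (Sym2 V))).Reachable u v) := by
  intro k
  induction k with
  | zero => omega
  | succ n ih =>
    intro h2 h5'
    rcases Nat.lt_or_ge n 2 with hn | hn
    · -- base case : n + 1 = 2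
      obtain rfl : n = 1 := by omega
      obtain ⟨b, rfl⟩ := Sym2.mem_iff_exists.1 hae
      have hadj : G.Adj a b := SimpleGraph.mem_edgeFinset.mp he
      refine ⟨{a, b}, {s(a, b)}, ?_, Finset.card_singleton _, ?_, Finset.mem_singleton_self _, ?_, ?_, ?_⟩
      · rw [Finset.card_insert_of_notMem (by simpa using hadj.ne), Finset.card_singleton]
      · simpa using he
      · intro e' he' v hv
        rw [Finset.mem_singleton] at he'
        subst he'
        rcases Sym2.mem_iff.1 hv with rfl | rfl <;> simp
      · intro u hu
        rcases Finset.mem_insert.1 hu with rfl | hu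
        · exact SimpleGraph.Reachable.refl _
        · rw [Finset.mem_singleton] at hu; subst hu; exact hadj.reachable
      · have hab : (SimpleGraph.fromEdgeSet ({s(a, b)} : Finset (Sym2 V))).Reachable a b :=
          SimpleGraph.Adj.reachable ((SimpleGraph.fromEdgeSet_adj _).2 ⟨by simp, hadj.ne⟩)
        intro u hu v hv
        rcases Finset.mem_insert.1 hu with rfl | hu <;>
          [skip; (rw [Finset.mem_singleton] at hu; subst hu)] <;>
        (rcases Finset.mem_insert.1 hv with rfl | hv <;>
          [skip; (rw [Finset.mem_singleton] at hv; subst hv)])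
        · exact SimpleGraph.Reachable.refl _
        · exact hab
        · exact hab.symm
        · exact SimpleGraph.Reachable.refl _
    · -- inductive step
      obtain ⟨W, F, hWc, hFc, hFG, heF, hend, hreach, hconn⟩ := ih hn (by omega)
      have haW : a ∈ W := hend e heF a hae
      have : ∃ x, G.Reachable a x ∧ x ∉ W := by
        by_contra hc
        push_neg at hc
        have : {w : V | G.Reachable a w} ⊆ ↑W := fun w hw => hc w hw
        have := Set.ncard_le_ncard this (Set.toFinite _)
        rw [Set.ncard_coe_finset] at this
        omega
      obtain ⟨x, hax, hxW⟩ := this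
      obtain ⟨p⟩ := hax
      obtain ⟨u, v, huW, hvW, huv⟩ := cross_edge p haW hxW
      have hvnew : s(u, v) ∉ F := fun h => hvW (hend _ h v (Sym2.mem_mk_right u v))
      have hmono : SimpleGraph.fromEdgeSet (F : Set (Sym2 V)) ≤
          SimpleGraph.fromEdgeSet ((insert s(u, v) F : Finset (Sym2 V)) : Set (Sym2 V)) := by
        apply SimpleGraph.fromEdgeSet_mono
        rw [Finset.coe_insert]
        exact Set.subset_insert _ _
      have huvr : (SimpleGraph.fromEdgeSet ((insert s(u, v) F : Finset (Sym2 V)) :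
          Set (Sym2 V))).Reachable u v :=
        SimpleGraph.Adj.reachable ((SimpleGraph.fromEdgeSet_adj _).2 ⟨by simp, huv.ne⟩)
      refine ⟨insert v W, insert s(u, v) F, ?_, ?_, ?_, Finset.mem_insert_of_mem heF, ?_, ?_, ?_⟩
      · rw [Finset.card_insert_of_notMem hvW, hWc]
      · rw [Finset.card_insert_of_notMem hvnew, hFc]; omega
      · intro e' he'
        rcases Finset.mem_insert.1 he' with rfl | he'
        · exact SimpleGraph.mem_edgeFinset.mpr huv
        · exact hFG he'
      · intro e' he' w hw
        rcases Finset.mem_insert.1 he' with rfl | he'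
        · rcases Sym2.mem_iff.1 hw with rfl | rfl
          · exact Finset.mem_insert_of_mem huW
          · exact Finset.mem_insert_self _ _
        · exact Finset.mem_insert_of_mem (hend e' he' w hw)
      · intro w hw
        rcases Finset.mem_insert.1 hw with rfl | hw
        · exact (hreach u huW).trans huv.reachable
        · exact hreach w hw
      · intro p hp q hq
        have key : ∀ w ∈ W, (SimpleGraph.fromEdgeSet ((insert s(u, v) F : Finset (Sym2 V)) :
            Set (Sym2 V))).Reachable v w :=
          fun w hw => huvr.symm.trans ((hconn u huW w hw).mono hmono)
        rcases Finset.mem_insert.1 hp with rfl | hP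
        · rcases Finset.mem_insert.1 hq with rfl | hQ
          · exact SimpleGraph.Reachable.refl _
          · exact key q hQ
        · rcases Finset.mem_insert.1 hq with rfl | hQ
          · exact (key p hP).symm
          · exact (hconn p hP q hQ).mono hmono

/-- in a finite simple graph `G`, the number of edges whose connected
component contains at least 5 vertices is at most 4 times the number of subgraphs of `G`
that are trees on 5 vertices, i.e. pairs `(W, F)` with `W` a 5-element vertex set, `F` a
4-element set of edges of `G` with both endpoints in `W`, such that `(W, F)` is
connected. -/
theorem edges_in_big_components_le_four_times_trees (V : Type) [Fintype V] [DecidableEq V]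
    (G : SimpleGraph V) :
    (G.edgeFinset.filter
        (fun e => ∀ v ∈ e, 5 ≤ {w : V | G.Reachable v w}.ncard)).card ≤
      4 * ((((Finset.univ : Finset V).powersetCard 5) ×ˢ (G.edgeFinset.powersetCard 4)).filter
        (fun p => (∀ e ∈ p.2, ∀ v ∈ e, v ∈ p.1) ∧
          ∀ u ∈ p.1, ∀ v ∈ p.1,
            (SimpleGraph.fromEdgeSet (p.2 : Set (Sym2 V))).Reachable u v)).card := by
  classical
  set S := G.edgeFinset.filter
      (fun e => ∀ v ∈ e, 5 ≤ {w : V | G.Reachable v w}.ncard) with hS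
  set T := (((Finset.univ : Finset V).powersetCard 5) ×ˢ (G.edgeFinset.powersetCard 4)).filter
      (fun p => (∀ e ∈ p.2, ∀ v ∈ e, v ∈ p.1) ∧
        ∀ u ∈ p.1, ∀ v ∈ p.1,
          (SimpleGraph.fromEdgeSet (p.2 : Set (Sym2 V))).Reachable u v) with hT
  have H : ∀ e ∈ S, ∃ p : Finset V × Finset (Sym2 V), p ∈ T ∧ e ∈ p.2 := by
    intro e heS
    rw [hS, Finset.mem_filter] at heS
    obtain ⟨he, hbig⟩ := heS
    obtain ⟨W, F, hWc, hFc, hFG, heF, hend, -, hconn⟩ :=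
      grow e.out.1 (hbig _ (Sym2.out_fst_mem e)) e he (Sym2.out_fst_mem e) 5
        (by norm_num) le_rfl
    refine ⟨(W, F), ?_, heF⟩
    rw [hT, Finset.mem_filter, Finset.mem_product]
    exact ⟨⟨Finset.mem_powersetCard.2 ⟨Finset.subset_univ _, hWc⟩,
      Finset.mem_powersetCard.2 ⟨hFG, hFc⟩⟩, hend, hconn⟩
  set f : Sym2 V → Finset V × Finset (Sym2 V) :=
    fun e => if h : e ∈ S then (H e h).choose else (∅, ∅) with hf
  apply Finset.card_le_mul_card_image_of_maps_to (f := f)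
  · intro e he
    rw [hf]
    simp only [dif_pos he]
    exact (H e he).choose_spec.1
  · intro p hp
    have hsub : S.filter (fun e => f e = p) ⊆ p.2 := by
      intro e he'
      rw [Finset.mem_filter] at he'
      obtain ⟨heS, hfe⟩ := he'
      have := (H e heS).choose_spec.2
      rw [hf] at hfe
      simp only [dif_pos heS] at hfe
      rwa [hfe] at this
    have hc4 : p.2.card = 4 := by
      rw [hT, Finset.mem_filter, Finset.mem_product] at hp
      exact (Finset.mem_powersetCard.1 hp.1.2).2
    calc (S.filter (fun e => f e = p)).card ≤ p.2.card := Finset.card_le_card hsub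
      _ = 4 := hc4
end
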